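/- arXiv:0910.1914 — 6 statements merged into one kernel-verified Lean document; each statement's English description precedes it below -/
import Mathlib

section
/- Let M0, Mt, M1 ∈ SL(2,C), with p_ν = Tr(M_ν) for ν ∈ {0,t,1,∞} where M∞ = (M1 Mt M0)^{-1}, and p_{0t} = Tr(M0 Mt), p_{1t} = Tr(M1 Mt), p_{01} = Tr(M0 M1). Then Tr(M0 Mt^{-1} M1 Mt) = p_0 p_1 + p_t p_∞ − p_{0t} p_{1t} − p_{01}. -/
open Matrix

/-- Trace of the conjugated product `M0 Mt⁻¹ M1 Mt` in terms of the seven trace coordinates. -/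
theorem trace_conjugated_product (M0 Mt M1 : Matrix (Fin 2) (Fin 2) ℂ)
    (h0 : M0.det = 1) (ht : Mt.det = 1) (h1 : M1.det = 1) :
    let Minf := (M1 * Mt * M0)⁻¹
    let p0 := M0.trace
    let pt := Mt.trace
    let p1 := M1.trace
    let pinf := Minf.trace
    let p0t := (M0 * Mt).trace
    let p1t := (M1 * Mt).trace
    let p01 := (M0 * M1).trace
    (M0 * Mt⁻¹ * M1 * Mt).trace = p0 * p1 + pt * pinf - p0t * p1t - p01 := by
  intro Minf p0 pt p1 pinf p0t p1t p01
  have hdet : (M1 * Mt * M0).det = 1 := by simp [Matrix.det_mul, h0, ht, h1]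
  have hinv : Minf = (M1 * Mt * M0).adjugate := by
    simp [Minf, Matrix.inv_def, hdet]
  have hinvt : Mt⁻¹ = Mt.adjugate := by
    simp [Matrix.inv_def, ht]
  have e0 := Matrix.det_fin_two M0
  have et := Matrix.det_fin_two Mt
  have e1 := Matrix.det_fin_two M1
  rw [h0] at e0; rw [ht] at et; rw [h1] at e1
  simp [p0, pt, p1, pinf, p0t, p1t, p01, hinv, hinvt, Matrix.adjugate_fin_two,
    Matrix.trace_fin_two, Matrix.mul_apply, Fin.sum_univ_two]
  linear_combination (M0 0 1 * M1 1 0 + M0 1 0 * M1 0 1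
    - M0 0 0 * M1 1 1 - M0 1 1 * M1 0 0) * et
end

section
/- Fix constants α0, β0, γ0, α1 ∈ C and let q, p, u, v, w be differentiable complex-valued functions on an interval satisfying the Tracy–Widom system: t(1−t)q' = αq + βp, t(1−t)p' = −γq − αp, u' = q², v' = pq, w' = p², where α = α0 + α1 t + v, β = β0 + (2α1−1)u, γ = γ0 − (2α1+1)w. Then I1 = 2αpq + βp² + γq² − 2α1 v and I2 = (v+α0)² − βγ − 2α1 t(1−t) pq + 2α1(1−t)v − I1 t are constant in t. -/
lemma tw_key1 (α0 β0 γ0 α1 T q p u v w qd pd : ℂ)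
    (h1 : T * (1 - T) * qd = (α0 + α1 * T + v) * q + (β0 + (2 * α1 - 1) * u) * p)
    (h2 : T * (1 - T) * pd = -(γ0 - (2 * α1 + 1) * w) * q - (α0 + α1 * T + v) * p) :
    2 * (α1 + p * q) * (p * q) + 2 * (α0 + α1 * T + v) * (pd * q + p * qd)
      + (2 * α1 - 1) * q ^ 2 * p ^ 2 + 2 * (β0 + (2 * α1 - 1) * u) * (p * pd)
      - (2 * α1 + 1) * p ^ 2 * q ^ 2 + 2 * (γ0 - (2 * α1 + 1) * w) * (q * qd)
      - 2 * α1 * (p * q) = 0 := by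
  by_cases hm : T * (1 - T) = 0
  · have e1 : (α0 + α1 * T + v) * q + (β0 + (2 * α1 - 1) * u) * p = 0 := by
      rw [← h1, hm]; ring
    have e2 : -(γ0 - (2 * α1 + 1) * w) * q - (α0 + α1 * T + v) * p = 0 := by
      rw [← h2, hm]; ring
    linear_combination 2 * pd * e1 - 2 * qd * e2
  · have h3 : T * (1 - T) *
      (2 * (α1 + p * q) * (p * q) + 2 * (α0 + α1 * T + v) * (pd * q + p * qd)
      + (2 * α1 - 1) * q ^ 2 * p ^ 2 + 2 * (β0 + (2 * α1 - 1) * u) * (p * pd)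
      - (2 * α1 + 1) * p ^ 2 * q ^ 2 + 2 * (γ0 - (2 * α1 + 1) * w) * (q * qd)
      - 2 * α1 * (p * q)) = 0 := by
      linear_combination (2 * (α0 + α1 * T + v) * p + 2 * (γ0 - (2 * α1 + 1) * w) * q) * h1
        + (2 * (α0 + α1 * T + v) * q + 2 * (β0 + (2 * α1 - 1) * u) * p) * h2
    exact (mul_eq_zero.mp h3).resolve_left hm

lemma tw_key2 (α0 β0 γ0 α1 T q p u v w qd pd : ℂ)
    (h1 : T * (1 - T) * qd = (α0 + α1 * T + v) * q + (β0 + (2 * α1 - 1) * u) * p)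
    (h2 : T * (1 - T) * pd = -(γ0 - (2 * α1 + 1) * w) * q - (α0 + α1 * T + v) * p) :
    2 * (v + α0) * (p * q)
      - ((2 * α1 - 1) * q ^ 2 * (γ0 - (2 * α1 + 1) * w)
         + (β0 + (2 * α1 - 1) * u) * (-((2 * α1 + 1) * p ^ 2)))
      - 2 * α1 * ((1 - 2 * T) * (p * q) + T * (1 - T) * (pd * q + p * qd))
      + 2 * α1 * (-v + (1 - T) * (p * q))
      - (2 * (α0 + α1 * T + v) * (p * q) + (β0 + (2 * α1 - 1) * u) * p ^ 2
         + (γ0 - (2 * α1 + 1) * w) * q ^ 2 - 2 * α1 * v) = 0 := by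
  linear_combination (-2 * α1 * p) * h1 + (-2 * α1 * q) * h2

lemma tw_const_aux {a b : ℝ} (F : ℝ → ℂ)
    (h : ∀ t ∈ Set.Ioo a b, HasDerivAt F 0 t) :
    ∀ t1 ∈ Set.Ioo a b, ∀ t2 ∈ Set.Ioo a b, F t1 = F t2 := by
  intro t1 h1 t2 h2
  have key := (convex_Ioo a b).norm_image_sub_le_of_norm_hasDerivWithin_le
    (C := 0) (f' := fun _ => (0:ℂ)) (fun x hx => (h x hx).hasDerivWithinAt)
    (fun x _ => by simp) h1 h2
  rw [zero_mul] at key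
  have h0 : F t2 - F t1 = 0 := norm_le_zero_iff.mp key
  linear_combination -h0

/-- First integrals of the Tracy–Widom system: `I1` and `I2` are constant in `t`. -/
theorem tracy_widom_first_integrals (α0 β0 γ0 α1 : ℂ) (a b : ℝ)
    (q p u v w qd pd : ℝ → ℂ)
    (hq : ∀ t ∈ Set.Ioo a b, HasDerivAt q (qd t) t)
    (hp : ∀ t ∈ Set.Ioo a b, HasDerivAt p (pd t) t)
    (hu : ∀ t ∈ Set.Ioo a b, HasDerivAt u ((q t) ^ 2) t)
    (hv : ∀ t ∈ Set.Ioo a b, HasDerivAt v (p t * q t) t)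
    (hw : ∀ t ∈ Set.Ioo a b, HasDerivAt w ((p t) ^ 2) t)
    (heqq : ∀ t ∈ Set.Ioo a b, (t : ℂ) * (1 - (t : ℂ)) * qd t =
      (α0 + α1 * (t : ℂ) + v t) * q t + (β0 + (2 * α1 - 1) * u t) * p t)
    (heqp : ∀ t ∈ Set.Ioo a b, (t : ℂ) * (1 - (t : ℂ)) * pd t =
      -(γ0 - (2 * α1 + 1) * w t) * q t - (α0 + α1 * (t : ℂ) + v t) * p t) :
    ∀ t1 ∈ Set.Ioo a b, ∀ t2 ∈ Set.Ioo a b,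
      (2 * (α0 + α1 * (t1 : ℂ) + v t1) * p t1 * q t1 + (β0 + (2 * α1 - 1) * u t1) * (p t1) ^ 2
        + (γ0 - (2 * α1 + 1) * w t1) * (q t1) ^ 2 - 2 * α1 * v t1
       = 2 * (α0 + α1 * (t2 : ℂ) + v t2) * p t2 * q t2 + (β0 + (2 * α1 - 1) * u t2) * (p t2) ^ 2
        + (γ0 - (2 * α1 + 1) * w t2) * (q t2) ^ 2 - 2 * α1 * v t2)
      ∧
      ((v t1 + α0) ^ 2 - (β0 + (2 * α1 - 1) * u t1) * (γ0 - (2 * α1 + 1) * w t1)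
        - 2 * α1 * (t1 : ℂ) * (1 - (t1 : ℂ)) * p t1 * q t1 + 2 * α1 * (1 - (t1 : ℂ)) * v t1
        - (2 * (α0 + α1 * (t1 : ℂ) + v t1) * p t1 * q t1 + (β0 + (2 * α1 - 1) * u t1) * (p t1) ^ 2
           + (γ0 - (2 * α1 + 1) * w t1) * (q t1) ^ 2 - 2 * α1 * v t1) * (t1 : ℂ)
       = (v t2 + α0) ^ 2 - (β0 + (2 * α1 - 1) * u t2) * (γ0 - (2 * α1 + 1) * w t2)
        - 2 * α1 * (t2 : ℂ) * (1 - (t2 : ℂ)) * p t2 * q t2 + 2 * α1 * (1 - (t2 : ℂ)) * v t2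
        - (2 * (α0 + α1 * (t2 : ℂ) + v t2) * p t2 * q t2 + (β0 + (2 * α1 - 1) * u t2) * (p t2) ^ 2
           + (γ0 - (2 * α1 + 1) * w t2) * (q t2) ^ 2 - 2 * α1 * v t2) * (t2 : ℂ)) := by
  have hF1 : ∀ t ∈ Set.Ioo a b,
      HasDerivAt (fun s : ℝ => 2 * (α0 + α1 * (s : ℂ) + v s) * p s * q s
        + (β0 + (2 * α1 - 1) * u s) * (p s) ^ 2
        + (γ0 - (2 * α1 + 1) * w s) * (q s) ^ 2 - 2 * α1 * v s) 0 t := by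
    intro t ht
    have hT : HasDerivAt (fun s : ℝ => (s : ℂ)) 1 t := by
      exact Complex.ofRealCLM.hasDerivAt
    have hA : HasDerivAt (fun s : ℝ => α0 + α1 * (s : ℂ) + v s) (0 + α1 * 1 + p t * q t) t :=
      ((hasDerivAt_const t α0).add (hT.const_mul α1)).add (hv t ht)
    have hB : HasDerivAt (fun s : ℝ => β0 + (2 * α1 - 1) * u s)
        (0 + (2 * α1 - 1) * (q t) ^ 2) t :=
      (hasDerivAt_const t β0).add ((hu t ht).const_mul (2 * α1 - 1))
    have hC : HasDerivAt (fun s : ℝ => γ0 - (2 * α1 + 1) * w s)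
        (0 - (2 * α1 + 1) * (p t) ^ 2) t :=
      (hasDerivAt_const t γ0).sub ((hw t ht).const_mul (2 * α1 + 1))
    have hp2 : HasDerivAt (fun s : ℝ => (p s) ^ 2) (pd t * p t + p t * pd t) t := by
      exact ((hp t ht).mul (hp t ht)).congr_of_eventuallyEq (Filter.Eventually.of_forall fun s => pow_two (p s))
    have hq2 : HasDerivAt (fun s : ℝ => (q s) ^ 2) (qd t * q t + q t * qd t) t := by
      exact ((hq t ht).mul (hq t ht)).congr_of_eventuallyEq (Filter.Eventually.of_forall fun s => pow_two (q s))
    have hterm := ((((hA.const_mul 2).mul (hp t ht)).mul (hq t ht)).add (hB.mul hp2)).add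
        (hC.mul hq2) |>.sub ((hv t ht).const_mul (2 * α1))
    refine hterm.congr_deriv (Eq.symm ?_)
    simp only [Pi.mul_apply]
    linear_combination (-1 : ℂ) * tw_key1 α0 β0 γ0 α1 (t : ℂ) (q t) (p t) (u t) (v t) (w t)
      (qd t) (pd t) (heqq t ht) (heqp t ht)
  have hF2 : ∀ t ∈ Set.Ioo a b,
      HasDerivAt (fun s : ℝ => (v s + α0) ^ 2
        - (β0 + (2 * α1 - 1) * u s) * (γ0 - (2 * α1 + 1) * w s)
        - 2 * α1 * (s : ℂ) * (1 - (s : ℂ)) * p s * q s + 2 * α1 * (1 - (s : ℂ)) * v s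
        - (2 * (α0 + α1 * (s : ℂ) + v s) * p s * q s + (β0 + (2 * α1 - 1) * u s) * (p s) ^ 2
           + (γ0 - (2 * α1 + 1) * w s) * (q s) ^ 2 - 2 * α1 * v s) * (s : ℂ)) 0 t := by
    intro t ht
    have hT : HasDerivAt (fun s : ℝ => (s : ℂ)) 1 t := by
      exact Complex.ofRealCLM.hasDerivAt
    have hB : HasDerivAt (fun s : ℝ => β0 + (2 * α1 - 1) * u s)
        (0 + (2 * α1 - 1) * (q t) ^ 2) t :=
      (hasDerivAt_const t β0).add ((hu t ht).const_mul (2 * α1 - 1))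
    have hC : HasDerivAt (fun s : ℝ => γ0 - (2 * α1 + 1) * w s)
        (0 - (2 * α1 + 1) * (p t) ^ 2) t :=
      (hasDerivAt_const t γ0).sub ((hw t ht).const_mul (2 * α1 + 1))
    have hv2 : HasDerivAt (fun s : ℝ => (v s + α0) ^ 2)
        ((p t * q t) * (v t + α0) + (v t + α0) * (p t * q t)) t := by
      exact (((hv t ht).add_const α0).mul ((hv t ht).add_const α0)).congr_of_eventuallyEq (Filter.Eventually.of_forall fun s => pow_two (v s + α0))
    have hM : HasDerivAt (fun s : ℝ => 2 * α1 * (s : ℂ) * (1 - (s : ℂ)))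
        ((2 * α1 * 1) * (1 - (t : ℂ)) + (2 * α1 * (t : ℂ)) * (0 - 1)) t :=
      (hT.const_mul (2 * α1)).mul ((hasDerivAt_const t (1 : ℂ)).sub hT)
    have hL : HasDerivAt (fun s : ℝ => 2 * α1 * (1 - (s : ℂ)) * v s)
        ((2 * α1 * (0 - 1)) * v t + (2 * α1 * (1 - (t : ℂ))) * (p t * q t)) t :=
      (((hasDerivAt_const t (1 : ℂ)).sub hT).const_mul (2 * α1)).mul (hv t ht)
    have hF1t := (hF1 t ht).mul hT
    have hterm := ((hv2.sub (hB.mul hC)).sub ((hM.mul (hp t ht)).mul (hq t ht))).add hL |>.sub hF1t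
    refine hterm.congr_deriv (Eq.symm ?_)
    beta_reduce
    simp only [Pi.mul_apply]
    linear_combination (-1 : ℂ) * tw_key2 α0 β0 γ0 α1 (t : ℂ) (q t) (p t) (u t) (v t) (w t)
      (qd t) (pd t) (heqq t ht) (heqp t ht)
  intro t1 ht1 t2 ht2
  exact ⟨tw_const_aux _ hF1 t1 ht1 t2 ht2, tw_const_aux _ hF2 t1 ht1 t2 ht2⟩
end

section
/- Under the hypotheses of the Tracy–Widom system with ζ = 2αpq + βp² + γq² and constants I1, I2 defined as above, ζ satisfies the second-order ODE (t(1−t)ζ'')² + 4(ζ' − α1²)(tζ' − ζ)² − 4ζ'(tζ' − ζ)(ζ' + 2α0α1 − I1) = 4(I1 + I2)(ζ')². -/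
/-- The logarithmic derivative `ζ` of the Tracy–Widom determinant satisfies a second-order ODE
(σ-form of Painlevé VI, up to an affine change of variables). -/
theorem tracy_widom_zeta_ode (α0 β0 γ0 α1 : ℂ) (a b : ℝ)
    (q p u v w qd pd : ℝ → ℂ)
    (hq : ∀ t ∈ Set.Ioo a b, HasDerivAt q (qd t) t)
    (hp : ∀ t ∈ Set.Ioo a b, HasDerivAt p (pd t) t)
    (hu : ∀ t ∈ Set.Ioo a b, HasDerivAt u ((q t) ^ 2) t)
    (hv : ∀ t ∈ Set.Ioo a b, HasDerivAt v (p t * q t) t)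
    (hw : ∀ t ∈ Set.Ioo a b, HasDerivAt w ((p t) ^ 2) t)
    (heqq : ∀ t ∈ Set.Ioo a b, (t : ℂ) * (1 - (t : ℂ)) * qd t =
      (α0 + α1 * (t : ℂ) + v t) * q t + (β0 + (2 * α1 - 1) * u t) * p t)
    (heqp : ∀ t ∈ Set.Ioo a b, (t : ℂ) * (1 - (t : ℂ)) * pd t =
      -(γ0 - (2 * α1 + 1) * w t) * q t - (α0 + α1 * (t : ℂ) + v t) * p t) :
    ∀ t ∈ Set.Ioo a b,
      (fun ζ : ℝ → ℂ => fun I1 I2 : ℝ → ℂ =>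
        ((t : ℂ) * (1 - (t : ℂ)) * deriv (deriv ζ) t) ^ 2
          + 4 * (deriv ζ t - α1 ^ 2) * ((t : ℂ) * deriv ζ t - ζ t) ^ 2
          - 4 * deriv ζ t * ((t : ℂ) * deriv ζ t - ζ t) * (deriv ζ t + 2 * α0 * α1 - I1 t)
        = 4 * (I1 t + I2 t) * (deriv ζ t) ^ 2)
      (fun s : ℝ =>
        2 * (α0 + α1 * (s : ℂ) + v s) * p s * q s + (β0 + (2 * α1 - 1) * u s) * (p s) ^ 2
          + (γ0 - (2 * α1 + 1) * w s) * (q s) ^ 2)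
      (fun s : ℝ =>
        2 * (α0 + α1 * (s : ℂ) + v s) * p s * q s + (β0 + (2 * α1 - 1) * u s) * (p s) ^ 2
          + (γ0 - (2 * α1 + 1) * w s) * (q s) ^ 2 - 2 * α1 * v s)
      (fun s : ℝ =>
        (v s + α0) ^ 2 - (β0 + (2 * α1 - 1) * u s) * (γ0 - (2 * α1 + 1) * w s)
          - 2 * α1 * (s : ℂ) * (1 - (s : ℂ)) * p s * q s + 2 * α1 * (1 - (s : ℂ)) * v s
          - (2 * (α0 + α1 * (s : ℂ) + v s) * p s * q s + (β0 + (2 * α1 - 1) * u s) * (p s) ^ 2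
             + (γ0 - (2 * α1 + 1) * w s) * (q s) ^ 2 - 2 * α1 * v s) * (s : ℂ)) := by

  intro t ht
  set ζ : ℝ → ℂ := fun s : ℝ =>
      2 * (α0 + α1 * (s : ℂ) + v s) * p s * q s + (β0 + (2 * α1 - 1) * u s) * (p s) ^ 2
        + (γ0 - (2 * α1 + 1) * w s) * (q s) ^ 2 with hζdef
  have hcast : ∀ s : ℝ, HasDerivAt (fun x : ℝ => (x : ℂ)) 1 s := by
    intro s
    exact Complex.ofRealCLM.hasDerivAt (x := s)
  -- first derivative of ζ equals 2α1 p q on the interval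
  have hz : ∀ s ∈ Set.Ioo a b, HasDerivAt ζ (2 * α1 * p s * q s) s := by
    intro s hs
    have hα : HasDerivAt (fun x : ℝ => α0 + α1 * (x : ℂ) + v x) (α1 + p s * q s) s := by
      have := ((hasDerivAt_const s α0).add ((hcast s).const_mul α1)).add (hv s hs)
      exact this.congr_deriv (by simp)
    have hβ : HasDerivAt (fun x : ℝ => β0 + (2 * α1 - 1) * u x) ((2 * α1 - 1) * (q s) ^ 2) s := by
      exact ((hasDerivAt_const s β0).add ((hu s hs).const_mul (2 * α1 - 1))).congr_deriv (by simp)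
    have hγ : HasDerivAt (fun x : ℝ => γ0 - (2 * α1 + 1) * w x) (-((2 * α1 + 1) * (p s) ^ 2)) s := by
      exact ((hasDerivAt_const s γ0).sub ((hw s hs).const_mul (2 * α1 + 1))).congr_deriv (by simp)
    have h1 : HasDerivAt (fun x : ℝ => 2 * (α0 + α1 * (x : ℂ) + v x) * p x * q x)
        (((2 * (α1 + p s * q s)) * p s + 2 * (α0 + α1 * (s : ℂ) + v s) * pd s) * q s
          + (2 * (α0 + α1 * (s : ℂ) + v s) * p s) * qd s) s :=
      (((hα.const_mul 2).mul (hp s hs)).mul (hq s hs))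
    have h2 : HasDerivAt (fun x : ℝ => (β0 + (2 * α1 - 1) * u x) * (p x) ^ 2)
        ((2 * α1 - 1) * (q s) ^ 2 * (p s) ^ 2
          + (β0 + (2 * α1 - 1) * u s) * (2 * p s * pd s)) s := by
      have hp2 : HasDerivAt (fun x : ℝ => (p x) ^ 2) (2 * p s * pd s) s := by
        have := (hp s hs).pow 2
        exact this.congr_deriv (by norm_num)
      exact hβ.mul hp2
    have h3 : HasDerivAt (fun x : ℝ => (γ0 - (2 * α1 + 1) * w x) * (q x) ^ 2)
        (-((2 * α1 + 1) * (p s) ^ 2) * (q s) ^ 2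
          + (γ0 - (2 * α1 + 1) * w s) * (2 * q s * qd s)) s := by
      have hq2 : HasDerivAt (fun x : ℝ => (q x) ^ 2) (2 * q s * qd s) s := by
        have := (hq s hs).pow 2
        exact this.congr_deriv (by norm_num)
      exact hγ.mul hq2
    have hraw := (h1.add h2).add h3
    have hval : (((2 * (α1 + p s * q s)) * p s + 2 * (α0 + α1 * (s : ℂ) + v s) * pd s) * q s
          + (2 * (α0 + α1 * (s : ℂ) + v s) * p s) * qd s)
        + ((2 * α1 - 1) * (q s) ^ 2 * (p s) ^ 2
          + (β0 + (2 * α1 - 1) * u s) * (2 * p s * pd s))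
        + (-((2 * α1 + 1) * (p s) ^ 2) * (q s) ^ 2
          + (γ0 - (2 * α1 + 1) * w s) * (2 * q s * qd s))
        = 2 * α1 * p s * q s := by
      linear_combination (-2 * pd s) * (heqq s hs) + (2 * qd s) * (heqp s hs)
    rw [hζdef]
    exact hval ▸ hraw
  have hderiv : ∀ s ∈ Set.Ioo a b, deriv ζ s = 2 * α1 * p s * q s :=
    fun s hs => (hz s hs).deriv
  -- second derivative at t
  have hg : HasDerivAt (fun s : ℝ => 2 * α1 * p s * q s)
      (2 * α1 * (pd t * q t + p t * qd t)) t := by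
    have := ((hp t ht).mul (hq t ht)).const_mul (2 * α1)
    simpa [mul_add, mul_comm, mul_assoc, mul_left_comm] using this
  have hEv : deriv ζ =ᶠ[nhds t] fun s : ℝ => 2 * α1 * p s * q s :=
    Filter.eventuallyEq_of_mem (isOpen_Ioo.mem_nhds ht) hderiv
  have hd2 : HasDerivAt (deriv ζ) (2 * α1 * (pd t * q t + p t * qd t)) t :=
    hg.congr_of_eventuallyEq hEv
  have hdd : deriv (deriv ζ) t = 2 * α1 * (pd t * q t + p t * qd t) := hd2.deriv
  have hd1 : deriv ζ t = 2 * α1 * p t * q t := hderiv t ht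
  simp only []
  rw [hdd, hd1]
  simp only [hζdef]
  have e1 := heqq t ht
  have e2 := heqp t ht
  linear_combination (4 * α1 ^ 2 * q t *
      ((t : ℂ) * (1 - (t : ℂ)) * (pd t * q t + p t * qd t)
        + ((-(γ0 - (2 * α1 + 1) * w t) * q t - (α0 + α1 * (t : ℂ) + v t) * p t) * q t
          + p t * ((α0 + α1 * (t : ℂ) + v t) * q t + (β0 + (2 * α1 - 1) * u t) * p t)))) * e2
    + (4 * α1 ^ 2 * p t *
      ((t : ℂ) * (1 - (t : ℂ)) * (pd t * q t + p t * qd t)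
        + ((-(γ0 - (2 * α1 + 1) * w t) * q t - (α0 + α1 * (t : ℂ) + v t) * p t) * q t
          + p t * ((α0 + α1 * (t : ℂ) + v t) * q t + (β0 + (2 * α1 - 1) * u t) * p t)))) * e1
end

section
/- For all z ∈ C with |Re z| < 1/2 (so that all arguments avoid nonpositive integers), G(1+z)²·G(1−z)² / (G(1+2z)·G(1−2z)) = 2^{−4z²}·cos(πz) · G(1/2)⁴ / (G(1/2+z)²·G(1/2−z)²). -/
open Real Complex

/-- The Barnes G-function, defined by its Weierstrass product:
`G(x+1) = (2π)^{x/2} exp((ψ(1)x² − x(x+1))/2) ∏_{n≥1} (1+x/n)^n exp(−x + x²/(2n))`,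
where `ψ(1) = −γ`. -/
noncomputable def BarnesG (z : ℂ) : ℂ :=
  ((2 * Real.pi : ℝ) : ℂ) ^ ((z - 1) / 2) *
    Complex.exp ((-(Real.eulerMascheroniConstant : ℂ) * (z - 1) ^ 2 - (z - 1) * z) / 2) *
    ∏' n : ℕ, ((1 + (z - 1) / ((n : ℂ) + 1)) ^ (n + 1) *
      Complex.exp (-(z - 1) + (z - 1) ^ 2 / (2 * ((n : ℂ) + 1))))

namespace BarnesAux
open Filter Finset Topology

noncomputable def g (w : ℂ) (n : ℕ) : ℂ :=
  ((n : ℂ) + 1) * Complex.log (1 + w / ((n : ℂ) + 1)) - w + w ^ 2 / (2 * ((n : ℂ) + 1))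

lemma k_ne (n : ℕ) : ((n : ℂ) + 1) ≠ 0 :=
  Nat.cast_add_one_ne_zero n

lemma one_add_ne {w : ℂ} (hw : |w.re| < 1) (n : ℕ) : 1 + w / ((n : ℂ) + 1) ≠ 0 := by
  intro hcon
  have hw' : w = -((n : ℂ) + 1) := by
    have h2 : w / ((n : ℂ) + 1) = -1 := by linear_combination hcon
    have h3 := (div_eq_iff (k_ne n)).mp h2
    linear_combination h3
  have hre : w.re = -((n : ℝ) + 1) := by
    rw [hw']
    simp
  rw [hre, abs_neg, _root_.abs_of_nonneg (by positivity)] at hw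
  have : (0:ℝ) ≤ (n:ℝ) := Nat.cast_nonneg n
  linarith

lemma quad_ne {z : ℂ} (hz : |z.re| < 1 / 2) {k : ℕ} (hk : 1 ≤ k) :
    1 - 4 * z ^ 2 / ((k : ℂ)) ^ 2 ≠ 0 := by
  intro hcon
  have hk0 : ((k : ℂ)) ≠ 0 := Nat.cast_ne_zero.mpr (by omega)
  have h1 : (2 * z - (k : ℂ)) * (2 * z + (k : ℂ)) = 0 := by
    field_simp at hcon
    linear_combination -hcon
  have hk1 : (1:ℝ) ≤ (k:ℝ) := by exact_mod_cast hk
  rcases mul_eq_zero.mp h1 with h | h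
  · have : z.re = (k : ℝ) / 2 := by
      have hzz : z = (k : ℂ) / 2 := by linear_combination h / 2
      rw [hzz]; simp
    rw [this] at hz
    rw [_root_.abs_of_nonneg (by positivity)] at hz
    linarith
  · have : z.re = -((k : ℝ) / 2) := by
      have hzz : z = -((k : ℂ) / 2) := by linear_combination h / 2
      rw [hzz]; simp
    rw [this, abs_neg, _root_.abs_of_nonneg (by positivity)] at hz
    linarith

lemma log_cubic {x : ℂ} (hx : ‖x‖ ≤ 1 / 2) :
    ‖Complex.log (1 + x) - x + x ^ 2 / 2‖ ≤ ‖x‖ ^ 3 := by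
  have h1 : ‖x‖ < 1 := lt_of_le_of_lt hx (by norm_num)
  have h := Complex.norm_log_sub_logTaylor_le 2 h1
  have ht : Complex.logTaylor (2 + 1) x = x - x ^ 2 / 2 := by
    simp [Complex.logTaylor, Finset.sum_range_succ]
    try ring
  rw [ht, show Complex.log (1 + x) - (x - x ^ 2 / 2) =
    Complex.log (1 + x) - x + x ^ 2 / 2 from by ring] at h
  refine h.trans ?_
  have hnn : (0:ℝ) ≤ ‖x‖ := norm_nonneg x
  have h3 : (1:ℝ) / 2 ≤ 1 - ‖x‖ := by linarith
  have hinv : (1 - ‖x‖)⁻¹ ≤ 2 := by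
    have := inv_anti₀ (by norm_num : (0:ℝ) < 1 / 2) h3
    rw [show ((1:ℝ)/2)⁻¹ = 2 from by norm_num] at this
    exact this
  calc ‖x‖ ^ (2 + 1) * (1 - ‖x‖)⁻¹ / (2 + 1) ≤ ‖x‖ ^ 3 * 2 / (2 + 1) := by
        gcongr <;> norm_num
    _ ≤ ‖x‖ ^ 3 := by
        rw [div_le_iff₀ (by norm_num)]
        nlinarith [pow_nonneg hnn 3]

lemma norm_k (k : ℕ) : ‖((k : ℂ) + 1)‖ = (k : ℝ) + 1 := by
  rw [show ((k:ℂ)+1) = ((k+1:ℕ):ℂ) from by push_cast; ring]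
  rw [Complex.norm_natCast]
  push_cast; ring

lemma summable_g (w : ℂ) : Summable (g w) := by
  obtain ⟨N, hN⟩ := exists_nat_ge (2 * ‖w‖)
  rw [← summable_nat_add_iff N]
  have hsum : Summable (fun n : ℕ => ‖w‖ ^ 3 * (1 / ((n:ℝ) + 1) ^ 2)) := by
    apply Summable.mul_left
    have h0 : Summable (fun n : ℕ => 1 / (n:ℝ) ^ 2) :=
      summable_one_div_nat_pow.mpr one_lt_two
    have := (summable_nat_add_iff 1).mpr h0
    apply this.congr
    intro n
    push_cast
    ring
  apply Summable.of_norm_bounded hsum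
  intro n
  set k : ℕ := n + N with hkdef
  set x : ℂ := w / ((k:ℂ) + 1) with hxdef
  have hk : (0:ℝ) < (k:ℝ) + 1 := by positivity
  have hnormx : ‖x‖ = ‖w‖ / ((k:ℝ) + 1) := by rw [hxdef, norm_div, norm_k]
  have hx : ‖x‖ ≤ 1 / 2 := by
    rw [hnormx, div_le_iff₀ hk]
    have hNk : (N:ℝ) ≤ (k:ℝ) := by exact_mod_cast Nat.le_add_left N n
    linarith
  have hk0 : ((k:ℂ) + 1) ≠ 0 := k_ne k
  have hEq : g w k = ((k:ℂ) + 1) *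
      (Complex.log (1 + x) - x + x ^ 2 / 2) := by
    rw [g, hxdef]
    field_simp
    try ring
  rw [hEq, norm_mul, norm_k]
  calc ((k:ℝ) + 1) * ‖Complex.log (1 + x) - x + x ^ 2 / 2‖
      ≤ ((k:ℝ) + 1) * ‖x‖ ^ 3 := by
        exact mul_le_mul_of_nonneg_left (log_cubic hx) (by positivity)
    _ = ‖w‖ ^ 3 / ((k:ℝ) + 1) ^ 2 := by
        rw [hnormx]
        field_simp
        try ring
    _ ≤ ‖w‖ ^ 3 * (1 / ((n:ℝ) + 1) ^ 2) := by
        rw [mul_one_div]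
        have hkn : ((n:ℝ) + 1) ≤ ((k:ℝ) + 1) := by
          have : (n:ℝ) ≤ (k:ℝ) := by exact_mod_cast Nat.le_add_right n N
          linarith
        gcongr
        try positivity

lemma exp_g {w : ℂ} (hw : |w.re| < 1) (n : ℕ) :
    Complex.exp (g w n) =
      (1 + w / ((n : ℂ) + 1)) ^ (n + 1) *
        Complex.exp (-w + w ^ 2 / (2 * ((n : ℂ) + 1))) := by
  have h1 : g w n = ((n:ℂ) + 1) * Complex.log (1 + w / ((n:ℂ) + 1)) +
      (-w + w ^ 2 / (2 * ((n:ℂ) + 1))) := by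
    rw [g]; ring
  rw [h1, Complex.exp_add]
  congr 1
  set t := 1 + w / ((n:ℂ) + 1) with ht
  rw [show ((n:ℂ) + 1) * Complex.log t = ((n + 1 : ℕ) : ℂ) * Complex.log t from by
      push_cast; ring,
    Complex.exp_nat_mul, Complex.exp_log (by rw [ht]; exact one_add_ne hw n)]

lemma barnesG_exp {w : ℂ} (hw : |w.re| < 1) :
    BarnesG (1 + w) =
      Complex.exp (Complex.log ((2 * Real.pi : ℝ) : ℂ) * (w / 2) +
        (-(Real.eulerMascheroniConstant : ℂ) * w ^ 2 - w * (1 + w)) / 2 + ∑' n, g w n) := by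
  have hb : ((2 * Real.pi : ℝ) : ℂ) ≠ 0 :=
    Complex.ofReal_ne_zero.mpr (by positivity)
  have hprod : HasProd
      (fun n : ℕ => (1 + w / ((n:ℂ) + 1)) ^ (n + 1) *
        Complex.exp (-w + w ^ 2 / (2 * ((n:ℂ) + 1))))
      (Complex.exp (∑' n, g w n)) := by
    have hs : Tendsto (fun s : Finset ℕ => ∑ n ∈ s, g w n) atTop
        (𝓝 (∑' n, g w n)) := (summable_g w).hasSum
    have h2 := (Complex.continuous_exp.tendsto _).comp hs
    refine h2.congr fun s => ?_
    simp only [Function.comp]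
    rw [Complex.exp_sum]
    exact Finset.prod_congr rfl fun n _ => exp_g hw n
  rw [BarnesG]
  simp only [add_sub_cancel_left]
  rw [hprod.tprod_eq, Complex.cpow_def_of_ne_zero hb, ← Complex.exp_add,
    ← Complex.exp_add]


noncomputable def f (z : ℂ) (k : ℕ) : ℂ := (1 - 4 * z ^ 2 / (k : ℂ) ^ 2) ^ k

noncomputable def h (z : ℂ) (n : ℕ) : ℂ :=
  2 * g z n + 2 * g (-z) n + 2 * g (z - 1 / 2) n + 2 * g (-z - 1 / 2) n -
    (g (2 * z) n + g (-2 * z) n + 4 * g (-(1 / 2)) n)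

section Main

variable {z : ℂ} (hz : |z.re| < 1 / 2)

include hz

lemma hre_z : |z.re| < 1 := hz.trans (by norm_num)

lemma hre_neg_z : |(-z).re| < 1 := by
  rw [Complex.neg_re, abs_neg]; exact hre_z hz

lemma hre_sub : |(z - 1 / 2).re| < 1 := by
  have h' := abs_lt.mp hz
  have : (z - 1 / 2).re = z.re - 1 / 2 := by
    rw [Complex.sub_re, show ((1 : ℂ) / 2) = ((1 / 2 : ℝ) : ℂ) from by norm_num,
      Complex.ofReal_re]
  rw [this]
  rw [abs_lt]
  constructor <;> linarith [h'.1, h'.2]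

lemma hre_neg_sub : |(-z - 1 / 2).re| < 1 := by
  have h' := abs_lt.mp hz
  have : (-z - 1 / 2).re = -z.re - 1 / 2 := by
    rw [Complex.sub_re, Complex.neg_re,
      show ((1 : ℂ) / 2) = ((1 / 2 : ℝ) : ℂ) from by norm_num, Complex.ofReal_re]
  rw [this, abs_lt]
  constructor <;> linarith [h'.1, h'.2]

lemma hre_two : |(2 * z).re| < 1 := by
  have h' := abs_lt.mp hz
  have : (2 * z).re = 2 * z.re := by
    simp [Complex.mul_re]
  rw [this, abs_lt]
  constructor <;> linarith [h'.1, h'.2]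

lemma hre_neg_two : |(-2 * z).re| < 1 := by
  rw [show (-2 : ℂ) * z = -(2 * z) from by ring, Complex.neg_re, abs_neg]
  exact hre_two hz

omit hz

lemma hre_half : |(-(1 / 2) : ℂ).re| < 1 := by
  rw [show (-(1 / 2) : ℂ) = ((-(1 / 2) : ℝ) : ℂ) from by norm_num, Complex.ofReal_re]
  rw [abs_lt]; constructor <;> norm_num

include hz

lemma f_ne (k : ℕ) : f z k ≠ 0 := by
  cases k with
  | zero => simp [f]
  | succ m =>
    exact pow_ne_zero _ (quad_ne hz (by omega))

omit hz in
lemma base_identity (z k : ℂ) (hk : k ≠ 0) (hκ : 2 * k - 1 ≠ 0) :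
    (1 + z / k) ^ 2 * (1 + (-z) / k) ^ 2 *
      (1 + (z - 1 / 2) / k) ^ 2 * (1 + (-z - 1 / 2) / k) ^ 2 *
      (1 - 4 * z ^ 2 / k ^ 2) =
      (1 - 4 * z ^ 2 / (2 * k - 1) ^ 2) ^ 2 *
        (1 - 4 * z ^ 2 / (2 * k) ^ 2) ^ 2 *
      ((1 + 2 * z / k) * (1 + (-2 * z) / k) *
        (1 + (-(1 / 2)) / k) ^ 4) := by
  have hk2 : k ^ 2 ≠ 0 := pow_ne_zero _ hk
  have hκ2 : (2 * k - 1) ^ 2 ≠ 0 := pow_ne_zero _ hκ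
  have h2k : (2 * k) ^ 2 ≠ 0 := pow_ne_zero _ (mul_ne_zero two_ne_zero hk)
  rw [one_add_div hk, one_add_div hk, one_add_div hk, one_add_div hk,
      one_add_div hk, one_add_div hk, one_add_div hk,
      one_sub_div hk2, one_sub_div hκ2, one_sub_div h2k]
  rw [div_pow, div_pow, div_pow, div_pow, div_pow, div_pow, div_pow]
  rw [div_mul_div_comm, div_mul_div_comm, div_mul_div_comm, div_mul_div_comm,
      div_mul_div_comm, div_mul_div_comm, div_mul_div_comm, div_mul_div_comm]
  rw [div_eq_div_iff
      (by apply_rules [hk2, hκ2, h2k, mul_ne_zero, pow_ne_zero, two_ne_zero] <;> simp [npowRec])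
      (by apply_rules [hk2, hκ2, h2k, mul_ne_zero, pow_ne_zero, two_ne_zero] <;> simp [npowRec])]
  ring

omit hz in
lemma exp_E_identity (z : ℂ) (n : ℕ) :
    Complex.exp (-z + z ^ 2 / (2 * ((n : ℂ) + 1))) ^ 2 *
      Complex.exp (-(-z) + (-z) ^ 2 / (2 * ((n : ℂ) + 1))) ^ 2 *
      Complex.exp (-(z - 1 / 2) + (z - 1 / 2) ^ 2 / (2 * ((n : ℂ) + 1))) ^ 2 *
      Complex.exp (-(-z - 1 / 2) + (-z - 1 / 2) ^ 2 / (2 * ((n : ℂ) + 1))) ^ 2 =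
      Complex.exp (-(2 * z) + (2 * z) ^ 2 / (2 * ((n : ℂ) + 1))) *
      Complex.exp (-(-2 * z) + (-2 * z) ^ 2 / (2 * ((n : ℂ) + 1))) *
      Complex.exp (-(-(1 / 2)) + (-(1 / 2) : ℂ) ^ 2 / (2 * ((n : ℂ) + 1))) ^ 4 := by
  simp only [← Complex.exp_nat_mul, ← Complex.exp_add]
  congr 1
  push_cast
  ring

omit hz in
lemma pow_shuffle {u1 u2 u3 u4 u5 u6 u7 c0 d1 d2 e1 e2 e3 e4 e5 e6 e7 : ℂ} (n : ℕ)
    (hbase : u1 ^ 2 * u2 ^ 2 * u3 ^ 2 * u4 ^ 2 * c0 = d1 ^ 2 * d2 ^ 2 * (u5 * u6 * u7 ^ 4))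
    (hE : e1 ^ 2 * e2 ^ 2 * e3 ^ 2 * e4 ^ 2 = e5 * e6 * e7 ^ 4) :
    (u1 ^ (n + 1) * e1) ^ 2 * (u2 ^ (n + 1) * e2) ^ 2 * (u3 ^ (n + 1) * e3) ^ 2 *
      (u4 ^ (n + 1) * e4) ^ 2 * c0 ^ (n + 1) =
    d1 * d1 ^ (2 * n + 1) * d2 ^ (2 * n + 2) *
      (u5 ^ (n + 1) * e5 * (u6 ^ (n + 1) * e6) * (u7 ^ (n + 1) * e7) ^ 4) := by
  trans ((u1 ^ 2 * u2 ^ 2 * u3 ^ 2 * u4 ^ 2 * c0) ^ (n + 1) *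
    (e1 ^ 2 * e2 ^ 2 * e3 ^ 2 * e4 ^ 2))
  · ring
  · rw [hbase, hE]
    ring

set_option maxHeartbeats 1000000 in
include hz in
lemma exp_h_mul (n : ℕ) :
    Complex.exp (h z n) * f z (n + 1) =
      (1 - 4 * z ^ 2 / ((2 * n + 1 : ℕ) : ℂ) ^ 2) * f z (2 * n + 1) * f z (2 * n + 2) := by
  have hk : ((n : ℂ) + 1) ≠ 0 := k_ne n
  have hκ : 2 * ((n : ℂ) + 1) - 1 ≠ 0 := by
    rw [show 2 * ((n : ℂ) + 1) - 1 = ((2 * n + 1 : ℕ) : ℂ) from by push_cast; ring]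
    exact Nat.cast_ne_zero.mpr (by omega)
  have hexp2 : Complex.exp (h z n) *
      (Complex.exp (g (2 * z) n) * Complex.exp (g (-2 * z) n) *
        Complex.exp (g (-(1 / 2)) n) ^ 4) =
      Complex.exp (g z n) ^ 2 * Complex.exp (g (-z) n) ^ 2 *
        Complex.exp (g (z - 1 / 2) n) ^ 2 * Complex.exp (g (-z - 1 / 2) n) ^ 2 := by
    simp only [← Complex.exp_nat_mul, ← Complex.exp_add]
    congr 1
    unfold h
    push_cast
    ring
  have hne : Complex.exp (g (2 * z) n) * Complex.exp (g (-2 * z) n) *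
      Complex.exp (g (-(1 / 2)) n) ^ 4 ≠ 0 :=
    mul_ne_zero (mul_ne_zero (Complex.exp_ne_zero _) (Complex.exp_ne_zero _))
      (pow_ne_zero _ (Complex.exp_ne_zero _))
  apply mul_right_cancel₀ hne
  rw [show Complex.exp (h z n) * f z (n + 1) *
      (Complex.exp (g (2 * z) n) * Complex.exp (g (-2 * z) n) *
        Complex.exp (g (-(1 / 2)) n) ^ 4) =
      Complex.exp (h z n) *
      (Complex.exp (g (2 * z) n) * Complex.exp (g (-2 * z) n) *
        Complex.exp (g (-(1 / 2)) n) ^ 4) * f z (n + 1) from by ring, hexp2]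
  rw [exp_g (hre_z hz) n, exp_g (hre_neg_z hz) n, exp_g (hre_sub hz) n,
    exp_g (hre_neg_sub hz) n, exp_g (hre_two hz) n, exp_g (hre_neg_two hz) n,
    exp_g hre_half n]
  have hf1 : f z (n + 1) = (1 - 4 * z ^ 2 / ((n : ℂ) + 1) ^ 2) ^ (n + 1) := by
    unfold f
    rw [Nat.cast_add, Nat.cast_one]
  have hf2 : f z (2 * n + 1) =
      (1 - 4 * z ^ 2 / (2 * ((n : ℂ) + 1) - 1) ^ 2) ^ (2 * n + 1) := by
    unfold f
    push_cast
    ring_nf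
  have hf3 : f z (2 * n + 2) =
      (1 - 4 * z ^ 2 / (2 * ((n : ℂ) + 1)) ^ 2) ^ (2 * n + 2) := by
    unfold f
    push_cast
    ring_nf
  have hd1 : (1 - 4 * z ^ 2 / ((2 * n + 1 : ℕ) : ℂ) ^ 2) =
      (1 - 4 * z ^ 2 / (2 * ((n : ℂ) + 1) - 1) ^ 2) := by
    push_cast
    ring_nf
  rw [hf1, hf2, hf3, hd1]
  exact pow_shuffle n (base_identity z ((n : ℂ) + 1) hk hκ) (exp_E_identity z n)

include hz in
lemma prod_exp_h (N : ℕ) :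
    (∏ n ∈ Finset.range N, Complex.exp (h z n)) * ∏ k ∈ Finset.Ico 1 (N + 1), f z k =
      (∏ n ∈ Finset.range N, (1 - 4 * z ^ 2 / ((2 * n + 1 : ℕ) : ℂ) ^ 2)) *
        ∏ k ∈ Finset.Ico 1 (2 * N + 1), f z k := by
  induction N with
  | zero => simp
  | succ N ih =>
    have key := exp_h_mul hz N
    have hff : f z (2 * N + 1 + 1) = f z (2 * N + 2) := by norm_num
    rw [Finset.prod_range_succ, Finset.prod_range_succ,
      Finset.prod_Ico_succ_top (by omega : 1 ≤ N + 1),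
      show 2 * (N + 1) + 1 = 2 * N + 1 + 1 + 1 from by ring,
      Finset.prod_Ico_succ_top (by omega : 1 ≤ 2 * N + 1 + 1),
      Finset.prod_Ico_succ_top (by omega : 1 ≤ 2 * N + 1), hff]
    calc (∏ n ∈ Finset.range N, Complex.exp (h z n)) * Complex.exp (h z N) *
          ((∏ k ∈ Finset.Ico 1 (N + 1), f z k) * f z (N + 1)) =
        ((∏ n ∈ Finset.range N, Complex.exp (h z n)) *
          ∏ k ∈ Finset.Ico 1 (N + 1), f z k) * (Complex.exp (h z N) * f z (N + 1)) := by
          ring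
      _ = ((∏ n ∈ Finset.range N, (1 - 4 * z ^ 2 / ((2 * n + 1 : ℕ) : ℂ) ^ 2)) *
          ∏ k ∈ Finset.Ico 1 (2 * N + 1), f z k) *
          ((1 - 4 * z ^ 2 / ((2 * N + 1 : ℕ) : ℂ) ^ 2) * f z (2 * N + 1) * f z (2 * N + 2)) := by
          rw [ih, key]
      _ = _ := by ring

include hz in
lemma prod_exp_h' (N : ℕ) :
    (∏ n ∈ Finset.range N, Complex.exp (h z n)) =
      (∏ n ∈ Finset.range N, (1 - 4 * z ^ 2 / ((2 * n + 1 : ℕ) : ℂ) ^ 2)) *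
        ∏ k ∈ Finset.Ico (N + 1) (2 * N + 1), f z k := by
  have hne : (∏ k ∈ Finset.Ico 1 (N + 1), f z k) ≠ 0 :=
    Finset.prod_ne_zero_iff.mpr fun k _ => f_ne hz k
  apply mul_right_cancel₀ hne
  have hsplit : (∏ k ∈ Finset.Ico 1 (N + 1), f z k) *
      ∏ k ∈ Finset.Ico (N + 1) (2 * N + 1), f z k =
      ∏ k ∈ Finset.Ico 1 (2 * N + 1), f z k :=
    Finset.prod_Ico_consecutive _ (by omega) (by omega)
  calc (∏ n ∈ Finset.range N, Complex.exp (h z n)) * ∏ k ∈ Finset.Ico 1 (N + 1), f z k =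
      (∏ n ∈ Finset.range N, (1 - 4 * z ^ 2 / ((2 * n + 1 : ℕ) : ℂ) ^ 2)) *
        ∏ k ∈ Finset.Ico 1 (2 * N + 1), f z k := prod_exp_h hz N
    _ = _ := by rw [← hsplit]; ring

omit hz in
lemma harmonic_cast (M : ℕ) :
    ((harmonic M : ℚ) : ℝ) = ∑ i ∈ Finset.range M, (1 : ℝ) / ((i : ℝ) + 1) := by
  unfold harmonic
  push_cast
  simp [one_div]

omit hz in
lemma harmonic_tail :
    Tendsto (fun N : ℕ => ∑ k ∈ Finset.Ico (N + 1) (2 * N + 1), (1 : ℝ) / k) atTop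
      (𝓝 (Real.log 2)) := by
  have hmain : ∀ N : ℕ, 1 ≤ N →
      ∑ k ∈ Finset.Ico (N + 1) (2 * N + 1), (1 : ℝ) / k =
      ((harmonic (2 * N) : ℝ) - Real.log ((2 * N : ℕ) : ℝ)) -
        ((harmonic N : ℝ) - Real.log ((N : ℕ) : ℝ)) + Real.log 2 := by
    intro N hN
    have hsplit : ∑ i ∈ Finset.range N, (1 : ℝ) / ((i : ℝ) + 1) +
        ∑ i ∈ Finset.Ico N (2 * N), (1 : ℝ) / ((i : ℝ) + 1) =
        ∑ i ∈ Finset.range (2 * N), (1 : ℝ) / ((i : ℝ) + 1) := by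
      rw [Finset.range_eq_Ico, Finset.range_eq_Ico]
      exact Finset.sum_Ico_consecutive (fun i : ℕ => (1 : ℝ) / ((i : ℝ) + 1)) (Nat.zero_le N) (by omega : N ≤ 2 * N)
    have hshift : ∑ k ∈ Finset.Ico (N + 1) (2 * N + 1), (1 : ℝ) / k =
        ∑ i ∈ Finset.Ico N (2 * N), (1 : ℝ) / ((i : ℝ) + 1) := by
      rw [show (2 * N + 1) = 2 * N + 1 from rfl, ← Finset.sum_Ico_add' (fun k : ℕ => (1 : ℝ) / k) N (2 * N) 1]
      apply Finset.sum_congr rfl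
      intro i _
      push_cast
      ring
    have hlog : Real.log ((2 * N : ℕ) : ℝ) = Real.log 2 + Real.log ((N : ℕ) : ℝ) := by
      push_cast
      rw [Real.log_mul (by norm_num) (by
        have : (0:ℝ) < (N : ℝ) := by exact_mod_cast Nat.pos_of_ne_zero (by omega)
        exact this.ne')]
    rw [hshift, harmonic_cast, harmonic_cast, hlog, ← hsplit]
    ring
  have htwo : Tendsto (fun N : ℕ => 2 * N) atTop atTop :=
    tendsto_atTop_mono (fun n => by simp [id]; omega) tendsto_id
  have ha := Real.tendsto_harmonic_sub_log
  have hb := ha.comp htwo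
  have hcomb := (hb.sub ha).add (tendsto_const_nhds (x := Real.log 2))
  rw [sub_self, zero_add] at hcomb
  apply hcomb.congr'
  filter_upwards [eventually_ge_atTop 1] with N hN
  exact (hmain N hN).symm

noncomputable def r (z : ℂ) (k : ℕ) : ℂ :=
  (k : ℂ) * Complex.log (1 - 4 * z ^ 2 / (k : ℂ) ^ 2) + 4 * z ^ 2 / (k : ℂ)

omit hz in
lemma rbound {k : ℕ} (hk1 : 1 ≤ k) (hk2 : 2 * ‖4 * z ^ 2‖ ≤ (k : ℝ)) :
    ‖r z k‖ ≤ ‖4 * z ^ 2‖ ^ 2 / (k : ℝ) ^ 3 := by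
  set c := ‖4 * z ^ 2‖ with hc
  have hc0 : 0 ≤ c := norm_nonneg _
  have hkR : (1 : ℝ) ≤ (k : ℝ) := by exact_mod_cast hk1
  have hk0 : ((k : ℂ)) ≠ 0 := Nat.cast_ne_zero.mpr (by omega)
  set x : ℂ := -(4 * z ^ 2) / (k : ℂ) ^ 2 with hx
  have hnx : ‖x‖ = c / (k : ℝ) ^ 2 := by
    rw [hx, norm_div, norm_neg, norm_pow, Complex.norm_natCast, hc]
  have hxhalf : ‖x‖ ≤ 1 / 2 := by
    rw [hnx, div_le_iff₀ (by positivity)]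
    nlinarith
  have hr : r z k = (k : ℂ) * (Complex.log (1 + x) - x) := by
    have h1 : (1 : ℂ) - 4 * z ^ 2 / (k : ℂ) ^ 2 = 1 + x := by rw [hx]; ring
    have h2 : (k : ℂ) * x = -(4 * z ^ 2 / (k : ℂ)) := by
      rw [hx]
      field_simp
    unfold r
    rw [h1]
    linear_combination h2
  rw [hr, norm_mul, Complex.norm_natCast]
  have hlog := Complex.norm_log_one_add_sub_self_le (lt_of_le_of_lt hxhalf (by norm_num))
  have hb2 : ‖Complex.log (1 + x) - x‖ ≤ ‖x‖ ^ 2 := by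
    refine hlog.trans ?_
    have h3 : (1 : ℝ) / 2 ≤ 1 - ‖x‖ := by linarith
    have hi : (1 - ‖x‖)⁻¹ ≤ 2 := by
      have := inv_anti₀ (by norm_num : (0:ℝ) < 1 / 2) h3
      rw [show ((1:ℝ)/2)⁻¹ = 2 from by norm_num] at this
      exact this
    nlinarith [norm_nonneg x, sq_nonneg ‖x‖]
  calc (k : ℝ) * ‖Complex.log (1 + x) - x‖ ≤ (k : ℝ) * ‖x‖ ^ 2 :=
      mul_le_mul_of_nonneg_left hb2 (by positivity)
    _ = c ^ 2 / (k : ℝ) ^ 3 := by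
      rw [hnx]
      field_simp

include hz in
lemma tendsto_tail :
    Tendsto (fun N : ℕ => ∏ k ∈ Finset.Ico (N + 1) (2 * N + 1), f z k) atTop
      (𝓝 (Complex.exp (-(4 * z ^ 2) * (Real.log 2 : ℂ)))) := by
  have hsum : Tendsto (fun N : ℕ => ∑ k ∈ Finset.Ico (N + 1) (2 * N + 1),
      ((k : ℂ) * Complex.log (1 - 4 * z ^ 2 / (k : ℂ) ^ 2))) atTop
      (𝓝 (-(4 * z ^ 2) * (Real.log 2 : ℂ))) := by
    have hdecomp : ∀ N : ℕ, ∑ k ∈ Finset.Ico (N + 1) (2 * N + 1),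
        ((k : ℂ) * Complex.log (1 - 4 * z ^ 2 / (k : ℂ) ^ 2)) =
        -(4 * z ^ 2) * (∑ k ∈ Finset.Ico (N + 1) (2 * N + 1), (1 / (k : ℂ))) +
          ∑ k ∈ Finset.Ico (N + 1) (2 * N + 1), r z k := by
      intro N
      rw [Finset.mul_sum, ← Finset.sum_add_distrib]
      apply Finset.sum_congr rfl
      intro k _
      unfold r
      ring
    have hT1 : Tendsto (fun N : ℕ => ∑ k ∈ Finset.Ico (N + 1) (2 * N + 1), (1 / (k : ℂ)))
        atTop (𝓝 ((Real.log 2 : ℝ) : ℂ)) := by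
      have hcont := (Complex.continuous_ofReal.tendsto _).comp harmonic_tail
      apply hcont.congr
      intro N
      simp only [Function.comp]
      push_cast
      rfl
    have hT2 : Tendsto (fun N : ℕ => ∑ k ∈ Finset.Ico (N + 1) (2 * N + 1), r z k)
        atTop (𝓝 0) := by
      set c := ‖4 * z ^ 2‖ with hc
      have hc0 : 0 ≤ c := norm_nonneg _
      apply squeeze_zero_norm' (a := fun N : ℕ => c ^ 2 * (1 / ((N : ℝ) + 1)))
      · filter_upwards [eventually_ge_atTop (Nat.ceil (2 * c))] with N hN
        have hNc : 2 * c ≤ (N : ℝ) := by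
          calc 2 * c ≤ (Nat.ceil (2 * c) : ℝ) := Nat.le_ceil _
            _ ≤ N := by exact_mod_cast hN
        have hbound : ∀ k ∈ Finset.Ico (N + 1) (2 * N + 1),
            ‖r z k‖ ≤ c ^ 2 / ((N : ℝ) + 1) ^ 3 := by
          intro k hk
          have hk' := Finset.mem_Ico.mp hk
          have hkN : N + 1 ≤ k := hk'.1
          have hkR : ((N : ℝ) + 1) ≤ (k : ℝ) := by exact_mod_cast hkN
          have h1 : ‖r z k‖ ≤ c ^ 2 / (k : ℝ) ^ 3 := by
            apply rbound (by omega)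
            calc 2 * c ≤ (N : ℝ) := hNc
              _ ≤ (k : ℝ) := by linarith
          refine h1.trans ?_
          gcongr
          all_goals linarith
        calc ‖∑ k ∈ Finset.Ico (N + 1) (2 * N + 1), r z k‖ ≤
            ∑ k ∈ Finset.Ico (N + 1) (2 * N + 1), ‖r z k‖ := norm_sum_le _ _
          _ ≤ (Finset.Ico (N + 1) (2 * N + 1)).card • (c ^ 2 / ((N : ℝ) + 1) ^ 3) :=
            Finset.sum_le_card_nsmul _ _ _ hbound
          _ = (N : ℝ) * (c ^ 2 / ((N : ℝ) + 1) ^ 3) := by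
            rw [Nat.card_Ico, nsmul_eq_mul]
            congr 1
            push_cast [show 2 * N + 1 - (N + 1) = N from by omega]
            ring
          _ ≤ c ^ 2 * (1 / ((N : ℝ) + 1)) := by
            have h1 : (0:ℝ) ≤ c ^ 2 := sq_nonneg c
            have h2 : (0:ℝ) ≤ (N : ℝ) := Nat.cast_nonneg N
            rw [mul_one_div]
            calc (N : ℝ) * (c ^ 2 / ((N : ℝ) + 1) ^ 3) =
                ((N : ℝ) * c ^ 2) / ((N : ℝ) + 1) ^ 3 := by ring
              _ ≤ c ^ 2 / ((N : ℝ) + 1) := by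
                rw [div_le_div_iff₀ (by positivity) (by positivity)]
                have key : (0:ℝ) ≤ c ^ 2 * (((N:ℝ) + 1) * ((N:ℝ) ^ 2 + (N:ℝ) + 1)) := by positivity
                nlinarith [key]
      · simpa using tendsto_one_div_add_atTop_nhds_zero_nat.const_mul (c ^ 2)
    have hcomb := (hT1.const_mul (-(4 * z ^ 2))).add hT2
    rw [add_zero] at hcomb
    exact hcomb.congr fun N => (hdecomp N).symm
  have hcont := (Complex.continuous_exp.tendsto _).comp hsum
  apply hcont.congr
  intro N
  simp only [Function.comp]
  rw [Complex.exp_sum]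
  apply Finset.prod_congr rfl
  intro k hk
  have hk1 : 1 ≤ k := by
    have := (Finset.mem_Ico.mp hk).1
    omega
  unfold f
  rw [Complex.exp_nat_mul, Complex.exp_log (quad_ne hz hk1)]

omit hz in
lemma evenEq (j : ℕ) : (1 : ℂ) - 4 * z ^ 2 / ((2 * j + 2 : ℕ) : ℂ) ^ 2 =
    1 - z ^ 2 / ((j : ℂ) + 1) ^ 2 := by
  have hk := k_ne j
  rw [show ((2 * j + 2 : ℕ) : ℂ) = 2 * ((j : ℂ) + 1) from by push_cast; ring]
  field_simp
  ring

include hz in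
lemma quadB_ne (j : ℕ) : (1 : ℂ) - z ^ 2 / ((j : ℂ) + 1) ^ 2 ≠ 0 := by
  rw [← evenEq j]
  exact quad_ne hz (by omega)

include hz in
lemma sin_pi_z_ne (hz0 : z ≠ 0) : Complex.sin ((Real.pi : ℂ) * z) ≠ 0 := by
  rw [Ne, Complex.sin_eq_zero_iff]
  rintro ⟨m, hm⟩
  have hπ : ((Real.pi : ℝ) : ℂ) ≠ 0 := Complex.ofReal_ne_zero.mpr Real.pi_ne_zero
  have hzm : z = (m : ℂ) := by
    apply mul_left_cancel₀ hπ
    rw [hm]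
    ring
  have hre : z.re = (m : ℝ) := by rw [hzm]; simp
  rw [hre] at hz
  have hm1 : |m| < 1 := by
    have h0 : |((m : ℤ) : ℝ)| < 1 := lt_trans hz (by norm_num)
    exact_mod_cast h0
  have hm0 : m = 0 := Int.abs_lt_one_iff.mp hm1
  apply hz0
  rw [hzm, hm0]
  simp

omit hz in
lemma prod_split_even_odd (N : ℕ) :
    ∏ j ∈ Finset.range (2 * N), (1 - (2 * z) ^ 2 / ((j : ℂ) + 1) ^ 2) =
      (∏ n ∈ Finset.range N, (1 - 4 * z ^ 2 / ((2 * n + 1 : ℕ) : ℂ) ^ 2)) *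
        ∏ j ∈ Finset.range N, (1 - z ^ 2 / ((j : ℂ) + 1) ^ 2) := by
  induction N with
  | zero => simp
  | succ N ih =>
    rw [show 2 * (N + 1) = 2 * N + 1 + 1 from by ring, Finset.prod_range_succ,
      Finset.prod_range_succ, Finset.prod_range_succ, Finset.prod_range_succ, ih]
    have hA : (1 : ℂ) - (2 * z) ^ 2 / (((2 * N : ℕ) : ℂ) + 1) ^ 2 =
        1 - 4 * z ^ 2 / ((2 * N + 1 : ℕ) : ℂ) ^ 2 := by
      push_cast
      ring
    have hB : (1 : ℂ) - (2 * z) ^ 2 / (((2 * N + 1 : ℕ) : ℂ) + 1) ^ 2 =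
        1 - z ^ 2 / ((N : ℂ) + 1) ^ 2 := by
      rw [show ((2 * N + 1 : ℕ) : ℂ) + 1 = 2 * ((N : ℂ) + 1) from by push_cast; ring]
      have hk := k_ne N
      field_simp
    rw [hA, hB]
    ring

include hz in
lemma tendsto_oddprod :
    Tendsto (fun N : ℕ => ∏ n ∈ Finset.range N, (1 - 4 * z ^ 2 / ((2 * n + 1 : ℕ) : ℂ) ^ 2))
      atTop (𝓝 (Complex.cos ((Real.pi : ℂ) * z))) := by
  by_cases hz0 : z = 0
  · subst hz0
    have hone : ∀ N : ℕ, ∏ n ∈ Finset.range N,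
        (1 - 4 * (0 : ℂ) ^ 2 / ((2 * n + 1 : ℕ) : ℂ) ^ 2) = 1 := by
      intro N
      simp
    have : Complex.cos ((Real.pi : ℂ) * 0) = 1 := by
      rw [mul_zero, Complex.cos_zero]
    rw [this]
    exact tendsto_const_nhds.congr fun N => (hone N).symm
  · have hπ : ((Real.pi : ℝ) : ℂ) ≠ 0 := Complex.ofReal_ne_zero.mpr Real.pi_ne_zero
    have hsin := sin_pi_z_ne hz hz0
    have hden : (2 : ℂ) * Complex.sin ((Real.pi : ℂ) * z) ≠ 0 := mul_ne_zero two_ne_zero hsin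
    have htwo : Tendsto (fun N : ℕ => 2 * N) atTop atTop :=
      tendsto_atTop_mono (fun n => by simp [id]; omega) tendsto_id
    have E1 := Complex.tendsto_euler_sin_prod z
    have E2 := (Complex.tendsto_euler_sin_prod (2 * z)).comp htwo
    have hquot := E2.div (E1.const_mul 2) hden
    have hval : Complex.sin ((Real.pi : ℂ) * (2 * z)) /
        (2 * Complex.sin ((Real.pi : ℂ) * z)) = Complex.cos ((Real.pi : ℂ) * z) := by
      rw [show ((Real.pi : ℂ)) * (2 * z) = 2 * ((Real.pi : ℂ) * z) from by ring,
        Complex.sin_two_mul,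
        show (2 : ℂ) * Complex.sin ((Real.pi : ℂ) * z) * Complex.cos ((Real.pi : ℂ) * z) =
          (2 * Complex.sin ((Real.pi : ℂ) * z)) * Complex.cos ((Real.pi : ℂ) * z) from by ring]
      exact mul_div_cancel_left₀ _ hden
    rw [← hval]
    apply hquot.congr
    intro N
    have hE1ne : (Real.pi : ℂ) * z * ∏ j ∈ Finset.range N, (1 - z ^ 2 / ((j : ℂ) + 1) ^ 2) ≠ 0 :=
      mul_ne_zero (mul_ne_zero hπ hz0)
        (Finset.prod_ne_zero_iff.mpr fun j _ => quadB_ne hz j)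
    simp only [Pi.div_apply, Function.comp_apply]
    rw [div_eq_iff (mul_ne_zero two_ne_zero hE1ne)]
    rw [prod_split_even_odd N]
    ring

omit hz in
lemma hasSum_h : HasSum (h z)
    (2 * ∑' n, g z n + 2 * ∑' n, g (-z) n + 2 * ∑' n, g (z - 1 / 2) n +
      2 * ∑' n, g (-z - 1 / 2) n -
      (∑' n, g (2 * z) n + ∑' n, g (-2 * z) n + 4 * ∑' n, g (-(1 / 2)) n)) := by
  have s1 := (summable_g z).hasSum
  have s2 := (summable_g (-z)).hasSum
  have s3 := (summable_g (z - 1 / 2)).hasSum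
  have s4 := (summable_g (-z - 1 / 2)).hasSum
  have s5 := (summable_g (2 * z)).hasSum
  have s6 := (summable_g (-2 * z)).hasSum
  have s7 := (summable_g (-(1 / 2) : ℂ)).hasSum
  exact ((((s1.mul_left 2).add (s2.mul_left 2)).add (s3.mul_left 2)).add
    (s4.mul_left 2)).sub ((s5.add s6).add (s7.mul_left 4))

omit hz in
lemma summable_h : Summable (h z) := hasSum_h.summable

omit hz in
lemma tsum_h : ∑' n, h z n =
    2 * ∑' n, g z n + 2 * ∑' n, g (-z) n + 2 * ∑' n, g (z - 1 / 2) n +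
      2 * ∑' n, g (-z - 1 / 2) n -
      (∑' n, g (2 * z) n + ∑' n, g (-2 * z) n + 4 * ∑' n, g (-(1 / 2)) n) :=
  hasSum_h.tsum_eq

include hz in
lemma exp_tsum_h :
    Complex.exp (∑' n, h z n) =
      Complex.exp (-(4 * z ^ 2) * (Real.log 2 : ℂ)) * Complex.cos ((Real.pi : ℂ) * z) := by
  have hS := (summable_h (z := z)).hasSum.tendsto_sum_nat
  have h1 := (Complex.continuous_exp.tendsto _).comp hS
  have h2 : Tendsto (fun N : ℕ => ∏ n ∈ Finset.range N, Complex.exp (h z n)) atTop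
      (𝓝 (Complex.exp (∑' n, h z n))) := by
    apply h1.congr
    intro N
    simp only [Function.comp_apply]
    rw [Complex.exp_sum]
  have h3 : Tendsto (fun N : ℕ => ∏ n ∈ Finset.range N, Complex.exp (h z n)) atTop
      (𝓝 (Complex.cos ((Real.pi : ℂ) * z) * Complex.exp (-(4 * z ^ 2) * (Real.log 2 : ℂ)))) := by
    have := (tendsto_oddprod hz).mul (tendsto_tail hz)
    apply this.congr
    intro N
    exact (prod_exp_h' hz N).symm
  rw [tendsto_nhds_unique h2 h3]
  ring

end Main

end BarnesAux

open BarnesAux in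
/-- Barnes-function identity equivalent to the duplication formula, used in the
partial proof of the conjecture for the Macdonald-kernel constant. -/
theorem barnes_duplication_identity (z : ℂ) (hz : |z.re| < 1 / 2) :
    BarnesG (1 + z) ^ 2 * BarnesG (1 - z) ^ 2 / (BarnesG (1 + 2 * z) * BarnesG (1 - 2 * z)) =
      (2 : ℂ) ^ (-4 * z ^ 2) * Complex.cos (Real.pi * z) *
        BarnesG (1 / 2) ^ 4 / (BarnesG (1 / 2 + z) ^ 2 * BarnesG (1 / 2 - z) ^ 2) := by
  have e1 : BarnesG (1 + z) = Complex.exp (Complex.log ((2 * Real.pi : ℝ) : ℂ) * (z / 2) +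
      (-(Real.eulerMascheroniConstant : ℂ) * z ^ 2 - z * (1 + z)) / 2 + ∑' n, g z n) :=
    barnesG_exp (hre_z hz)
  have e2 : BarnesG (1 - z) = Complex.exp (Complex.log ((2 * Real.pi : ℝ) : ℂ) * (-z / 2) +
      (-(Real.eulerMascheroniConstant : ℂ) * (-z) ^ 2 - (-z) * (1 + -z)) / 2 +
      ∑' n, g (-z) n) := by
    rw [show (1 : ℂ) - z = 1 + -z from by ring]
    exact barnesG_exp (hre_neg_z hz)
  have e3 : BarnesG (1 + 2 * z) = Complex.exp (Complex.log ((2 * Real.pi : ℝ) : ℂ) * (2 * z / 2) +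
      (-(Real.eulerMascheroniConstant : ℂ) * (2 * z) ^ 2 - (2 * z) * (1 + 2 * z)) / 2 +
      ∑' n, g (2 * z) n) :=
    barnesG_exp (hre_two hz)
  have e4 : BarnesG (1 - 2 * z) = Complex.exp (Complex.log ((2 * Real.pi : ℝ) : ℂ) * (-2 * z / 2) +
      (-(Real.eulerMascheroniConstant : ℂ) * (-2 * z) ^ 2 - (-2 * z) * (1 + -2 * z)) / 2 +
      ∑' n, g (-2 * z) n) := by
    rw [show (1 : ℂ) - 2 * z = 1 + -2 * z from by ring]
    exact barnesG_exp (hre_neg_two hz)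
  have e5 : BarnesG (1 / 2 + z) = Complex.exp (Complex.log ((2 * Real.pi : ℝ) : ℂ) * ((z - 1 / 2) / 2) +
      (-(Real.eulerMascheroniConstant : ℂ) * (z - 1 / 2) ^ 2 - (z - 1 / 2) * (1 + (z - 1 / 2))) / 2 +
      ∑' n, g (z - 1 / 2) n) := by
    rw [show (1 : ℂ) / 2 + z = 1 + (z - 1 / 2) from by ring]
    exact barnesG_exp (hre_sub hz)
  have e6 : BarnesG (1 / 2 - z) = Complex.exp (Complex.log ((2 * Real.pi : ℝ) : ℂ) * ((-z - 1 / 2) / 2) +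
      (-(Real.eulerMascheroniConstant : ℂ) * (-z - 1 / 2) ^ 2 - (-z - 1 / 2) * (1 + (-z - 1 / 2))) / 2 +
      ∑' n, g (-z - 1 / 2) n) := by
    rw [show (1 : ℂ) / 2 - z = 1 + (-z - 1 / 2) from by ring]
    exact barnesG_exp (hre_neg_sub hz)
  have e7 : BarnesG (1 / 2) = Complex.exp (Complex.log ((2 * Real.pi : ℝ) : ℂ) * (-(1 / 2) / 2) +
      (-(Real.eulerMascheroniConstant : ℂ) * (-(1 / 2)) ^ 2 - (-(1 / 2)) * (1 + -(1 / 2))) / 2 +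
      ∑' n, g (-(1 / 2)) n) := by
    have := barnesG_exp (w := -(1 / 2)) hre_half
    rw [show (1 : ℂ) + -(1 / 2) = 1 / 2 from by norm_num] at this
    rw [this]
    norm_num
  have h2pow : (2 : ℂ) ^ (-4 * z ^ 2 : ℂ) = Complex.exp (-(4 * z ^ 2) * (Real.log 2 : ℂ)) := by
    rw [Complex.cpow_def_of_ne_zero two_ne_zero]
    rw [show (2 : ℂ) = ((2 : ℝ) : ℂ) from by norm_num,
      ← Complex.ofReal_log (by norm_num : (0 : ℝ) ≤ 2)]
    congr 1
    ring
  have hone : Complex.exp (-(4 * z ^ 2) * (Real.log 2 : ℂ)) *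
      Complex.exp ((4 * z ^ 2) * (Real.log 2 : ℂ)) = 1 := by
    rw [← Complex.exp_add, show -(4 * z ^ 2) * (Real.log 2 : ℂ) +
      (4 * z ^ 2) * (Real.log 2 : ℂ) = 0 from by ring, Complex.exp_zero]
  have hcos : Complex.cos ((Real.pi : ℂ) * z) =
      Complex.exp (∑' n, h z n + (4 * z ^ 2) * (Real.log 2 : ℂ)) := by
    rw [Complex.exp_add, exp_tsum_h hz]
    calc Complex.cos ((Real.pi : ℂ) * z) =
        (Complex.exp (-(4 * z ^ 2) * (Real.log 2 : ℂ)) *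
          Complex.exp ((4 * z ^ 2) * (Real.log 2 : ℂ))) * Complex.cos ((Real.pi : ℂ) * z) := by
          rw [hone, one_mul]
      _ = _ := by ring
  rw [e1, e2, e3, e4, e5, e6, e7, h2pow]
  rw [show Complex.cos (↑Real.pi * z) = Complex.cos ((Real.pi : ℂ) * z) from rfl, hcos]
  rw [div_eq_div_iff (mul_ne_zero (Complex.exp_ne_zero _) (Complex.exp_ne_zero _))
    (mul_ne_zero (pow_ne_zero _ (Complex.exp_ne_zero _)) (pow_ne_zero _ (Complex.exp_ne_zero _)))]
  simp only [← Complex.exp_nat_mul, ← Complex.exp_add]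
  congr 1
  rw [tsum_h]
  push_cast
  ring
end

section
/- For all n ≥ 1 and all x ∈ C avoiding poles, the Gauss multiplication formula holds: Γ(nx) = (2π)^{−(n−1)/2} n^{nx−1/2} ∏_{k=0}^{n−1} Γ(x + k/n). -/
open Real Complex

open Finset Filter Topology

-- |1 - exp(ψ I)| = 2 sin(ψ/2) for ψ ∈ [0, 2π]
lemma abs_one_sub_exp (ψ : ℝ) (h0 : 0 ≤ ψ) (h2 : ψ ≤ 2 * π) :
    ‖1 - Complex.exp (ψ * Complex.I)‖ = 2 * Real.sin (ψ / 2) := by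
  have hsin : 0 ≤ Real.sin (ψ / 2) := Real.sin_nonneg_of_nonneg_of_le_pi (by linarith) (by linarith)
  rw [Complex.norm_def]
  have : Complex.normSq (1 - Complex.exp (ψ * Complex.I)) = (2 * Real.sin (ψ / 2)) ^ 2 := by
    rw [Complex.exp_mul_I, Complex.normSq_apply]
    simp only [Complex.sub_re, Complex.sub_im, Complex.one_re, Complex.one_im, Complex.add_re,
      Complex.add_im, Complex.mul_re, Complex.mul_im, Complex.cos_ofReal_re, Complex.sin_ofReal_re,
      Complex.cos_ofReal_im, Complex.sin_ofReal_im, Complex.I_re, Complex.I_im]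
    have hc : Real.cos ψ = 1 - 2 * Real.sin (ψ/2) ^ 2 := by
      have h1 := Real.cos_two_mul' (ψ/2)
      have h2 := Real.sin_sq_add_cos_sq (ψ/2)
      have : (2 : ℝ) * (ψ/2) = ψ := by ring
      rw [this] at h1
      nlinarith
    nlinarith [Real.sin_sq_add_cos_sq ψ]
  rw [this, Real.sqrt_sq (by positivity)]



lemma prod_sin_eq (n : ℕ) (hn : 1 ≤ n) :
    ∏ k ∈ range (n - 1), (2 * Real.sin ((k + 1) * π / n)) = n := by
  obtain ⟨m, rfl⟩ : ∃ m, n = m + 1 := ⟨n - 1, (Nat.succ_pred_eq_of_pos hn).symm⟩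
  have hprim := Complex.isPrimitiveRoot_exp (m + 1) (Nat.succ_ne_zero m)
  have h := hprim.prod_one_sub_pow_eq_order
  have habs := congrArg (‖·‖) h
  rw [norm_prod] at habs
  have hterm : ∀ k ∈ range m,
      ‖1 - Complex.exp (2 * ↑π * Complex.I / (↑(m+1):ℂ)) ^ (k + 1)‖
        = 2 * Real.sin ((k + 1) * π / (m + 1)) := by
    intro k hk
    have hk' : k < m := mem_range.mp hk
    have hexp : Complex.exp (2 * ↑π * Complex.I / (↑(m+1):ℂ)) ^ (k + 1)
        = Complex.exp ((↑(2 * π * (k+1) / (m+1)) : ℂ) * Complex.I) := by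
      rw [← Complex.exp_nat_mul]
      congr 1
      push_cast
      have h0 : ((m : ℂ) + 1) ≠ 0 := Nat.cast_add_one_ne_zero m
      field_simp
    rw [hexp, abs_one_sub_exp]
    · congr 2
      field_simp
    · positivity
    · rw [div_le_iff₀ (by positivity)]
      have : (k : ℝ) + 1 ≤ (m : ℝ) + 1 := by exact_mod_cast Nat.succ_le_succ hk'.le
      nlinarith [Real.pi_pos]
  rw [Finset.prod_congr rfl hterm] at habs
  have : ‖(m : ℂ) + 1‖ = (m : ℝ) + 1 := by
    rw [show ((m:ℂ)+1) = ((m+1 : ℕ) : ℂ) by push_cast; ring, Complex.norm_natCast]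
    push_cast; ring
  rw [this] at habs
  simpa using habs

lemma gamma_prod_real (n : ℕ) (hn : 1 ≤ n) :
    (n : ℝ) * ∏ k ∈ range n, Real.Gamma (((k : ℝ) + 1) / n) =
      (2 * π) ^ (((n : ℝ) - 1) / 2) * Real.sqrt n := by
  have hn0 : (0 : ℝ) < n := by exact_mod_cast hn
  set q : ℝ := ∏ k ∈ range (n - 1), Real.Gamma (((k : ℝ) + 1) / n) with hq
  have hsplit : ∏ k ∈ range n, Real.Gamma (((k : ℝ) + 1) / n) = q := by
    have h1 : n = (n - 1) + 1 := (Nat.succ_pred_eq_of_pos hn).symm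
    rw [h1, Finset.prod_range_succ]
    have : (((n - 1 : ℕ) : ℝ) + 1) / n = 1 := by
      rw [div_eq_one_iff_eq hn0.ne']
      have : ((n - 1 : ℕ) : ℝ) = (n : ℝ) - 1 := by
        rw [Nat.cast_sub hn]; norm_num
      rw [this]; ring
    rw [← h1, this, Real.Gamma_one, mul_one]
  have hqpos : 0 < q := by
    apply Finset.prod_pos
    intro k _
    exact Real.Gamma_pos_of_pos (by positivity)
  have hrefl : q = ∏ k ∈ range (n - 1), Real.Gamma (1 - ((k : ℝ) + 1) / n) := by
    rw [hq, ← Finset.prod_range_reflect (fun k => Real.Gamma (((k : ℝ) + 1) / n)) (n - 1)]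
    apply Finset.prod_congr rfl
    intro j hj
    have hj' : j < n - 1 := mem_range.mp hj
    congr 1
    have h2 : ((n - 1 - 1 - j : ℕ) : ℝ) = (n : ℝ) - 2 - j := by
      have hnn : n - 1 - 1 - j + (2 + j) = n := by omega
      have := congrArg (Nat.cast : ℕ → ℝ) hnn
      push_cast at this
      linarith
    rw [h2]
    field_simp
    ring
  have hsin : ∏ k ∈ range (n - 1), Real.sin (π * (((k : ℝ) + 1) / n)) = n / 2 ^ (n - 1) := by
    have hp := prod_sin_eq n hn
    rw [Finset.prod_mul_distrib, Finset.prod_const, card_range] at hp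
    have h2 : (0 : ℝ) < 2 ^ (n - 1) := by positivity
    have harg : ∀ k ∈ range (n - 1),
        Real.sin (π * (((k : ℝ) + 1) / n)) = Real.sin (((k : ℝ) + 1) * π / n) := by
      intro k _; congr 1; ring
    rw [Finset.prod_congr rfl harg, eq_div_iff h2.ne']
    linarith [hp]
  have hq2 : q ^ 2 = (2 * π) ^ (n - 1) / n := by
    have : q ^ 2 = ∏ k ∈ range (n - 1),
        (Real.Gamma (((k : ℝ) + 1) / n) * Real.Gamma (1 - ((k : ℝ) + 1) / n)) := by
      rw [Finset.prod_mul_distrib, ← hq, ← hrefl]; ring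
    rw [this]
    have : ∀ k ∈ range (n - 1),
        Real.Gamma (((k : ℝ) + 1) / n) * Real.Gamma (1 - ((k : ℝ) + 1) / n)
          = π / Real.sin (π * (((k : ℝ) + 1) / n)) :=
      fun k _ => Real.Gamma_mul_Gamma_one_sub _
    rw [Finset.prod_congr rfl this, Finset.prod_div_distrib, Finset.prod_const, card_range, hsin]
    rw [div_div_eq_mul_div, mul_pow]
    field_simp
  rw [hsplit]
  have hL : (0:ℝ) ≤ (n : ℝ) * q := by positivity
  have hR : (0:ℝ) ≤ (2 * π) ^ (((n : ℝ) - 1) / 2) * Real.sqrt n := by positivity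
  rw [← Real.sqrt_sq hL, ← Real.sqrt_sq hR]
  congr 1
  have hrp : ((2 * π) ^ (((n : ℝ) - 1) / 2)) ^ 2 = (2 * π) ^ (n - 1) := by
    rw [← Real.rpow_natCast ((2 * π) ^ (((n : ℝ) - 1) / 2)) 2, ← Real.rpow_mul (by positivity)]
    have : ((n : ℝ) - 1) / 2 * (2 : ℕ) = ((n - 1 : ℕ) : ℝ) := by
      rw [Nat.cast_sub hn]; push_cast; ring
    rw [this, Real.rpow_natCast]
  rw [mul_pow, mul_pow, hrp, Real.sq_sqrt hn0.le, hq2]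
  field_simp

lemma cpow_prod_sum (w : ℂ) (hw : w ≠ 0) (n : ℕ) (f : ℕ → ℂ) :
    ∏ k ∈ range n, w ^ (f k) = w ^ (∑ k ∈ range n, f k) := by
  induction n with
  | zero => simp
  | succ n ih => rw [prod_range_succ, sum_range_succ, ih, Complex.cpow_add _ _ hw]

lemma prod_range_natMul (f : ℕ → ℂ) (n M : ℕ) :
    ∏ i ∈ range (n * M), f i = ∏ j ∈ range M, ∏ k ∈ range n, f (n * j + k) := by
  induction M with
  | zero => simp
  | succ M ih =>
    rw [Nat.mul_succ, Finset.prod_range_add, ih, prod_range_succ]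

lemma fact_prod_aux (s t : ℕ) : Nat.factorial s * ∏ i ∈ range t, (s + 1 + i) = Nat.factorial (s + t) := by
  induction t with
  | zero => simp
  | succ t ih =>
    rw [prod_range_succ, ← mul_assoc, ih]
    rw [show s + (t+1) = (s + t) + 1 by ring, Nat.factorial_succ]
    ring



lemma gauss_step (n : ℕ) (hn : 1 ≤ n) (x : ℂ)
    (hx : ∀ k : ℕ, k < n → ∀ m : ℕ, x + (k : ℂ) / (n : ℂ) ≠ -(m : ℂ))
    (m : ℕ) (hm : 1 ≤ m) :
    (n : ℂ) ^ ((n : ℂ) * x) * ∏ k ∈ range n, Complex.GammaSeq (x + (k : ℂ) / n) m =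
      Complex.GammaSeq ((n : ℂ) * x) (n * m) *
        ((m : ℂ) ^ (((n : ℂ) - 1) / 2) * ((Nat.factorial m : ℂ)) ^ n * (n : ℂ) ^ (n * m + n) /
          (Nat.factorial (n * m + n - 1) : ℂ)) *
        ∏ i ∈ range (n - 1), (((n * m + 1 + i : ℕ) : ℂ) / ((n : ℂ) * x + ((n * m + 1 + i : ℕ) : ℂ))) := by
  have hnC : (n : ℂ) ≠ 0 := Nat.cast_ne_zero.mpr (by omega)
  have hmC : (m : ℂ) ≠ 0 := Nat.cast_ne_zero.mpr (by omega)
  -- all linear factors are nonzero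
  have hpole : ∀ i : ℕ, (n : ℂ) * x + (i : ℕ) ≠ 0 := by
    intro i h
    have hr : i % n < n := Nat.mod_lt _ (by omega)
    apply hx (i % n) hr (i / n)
    have hi : (i : ℂ) = (n : ℂ) * (i / n : ℕ) + (i % n : ℕ) := by
      exact_mod_cast congrArg (Nat.cast : ℕ → ℂ) (Nat.div_add_mod i n).symm
    have : (n : ℂ) * (x + (i % n : ℕ) / n + (i / n : ℕ)) = 0 := by
      rw [mul_add, mul_add, mul_div_cancel₀ _ hnC]
      rw [hi] at h
      linear_combination h
    have h2 := mul_eq_zero.mp this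
    rcases h2 with h2 | h2
    · exact absurd h2 hnC
    · linear_combination h2
  -- key components
  set P : ℂ := ∏ i ∈ range (n * m + 1), ((n : ℂ) * x + (i : ℕ)) with hPdef
  set R : ℂ := ∏ i ∈ range (n - 1), ((n : ℂ) * x + ((n * m + 1 + i : ℕ) : ℂ)) with hRdef
  have hP : P ≠ 0 := prod_ne_zero_iff.mpr fun i _ => hpole i
  have hR : R ≠ 0 := prod_ne_zero_iff.mpr fun i _ => hpole (n * m + 1 + i)
  -- F1 : the double product of denominators
  have F1 : ∏ k ∈ range n, ∏ j ∈ range (m + 1), (x + (k : ℂ) / n + (j : ℕ)) =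
      P * R / (n : ℂ) ^ (n * (m + 1)) := by
    have e1 : ∀ k ∈ range n, ∀ j ∈ range (m + 1),
        (x + (k : ℂ) / n + (j : ℕ)) = ((n : ℂ) * x + ((n * j + k : ℕ) : ℂ)) / n := by
      intro k _ j _
      push_cast
      field_simp
      ring
    calc ∏ k ∈ range n, ∏ j ∈ range (m + 1), (x + (k : ℂ) / n + (j : ℕ))
        = ∏ k ∈ range n, ∏ j ∈ range (m + 1), ((n : ℂ) * x + ((n * j + k : ℕ) : ℂ)) / n := by
          refine prod_congr rfl fun k hk => prod_congr rfl fun j hj => e1 k hk j hj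
      _ = (∏ j ∈ range (m + 1), ∏ k ∈ range n, ((n : ℂ) * x + ((n * j + k : ℕ) : ℂ))) /
            (n : ℂ) ^ (n * (m + 1)) := by
          rw [Finset.prod_comm]
          simp only [Finset.prod_div_distrib, Finset.prod_const, Finset.card_range]
          rw [← pow_mul]
      _ = P * R / (n : ℂ) ^ (n * (m + 1)) := by
          rw [← prod_range_natMul (fun i => (n : ℂ) * x + (i : ℕ)) n (m + 1)]
          rw [show n * (m + 1) = (n * m + 1) + (n - 1) by rw [Nat.mul_succ]; omega,
            Finset.prod_range_add]
  -- F2 : product of cpow's of m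
  have F2 : ∏ k ∈ range n, (m : ℂ) ^ (x + (k : ℂ) / n) =
      (m : ℂ) ^ ((n : ℂ) * x) * (m : ℂ) ^ (((n : ℂ) - 1) / 2) := by
    rw [cpow_prod_sum _ hmC, ← Complex.cpow_add _ _ hmC]
    congr 1
    rw [Finset.sum_add_distrib, Finset.sum_const, card_range, ← Finset.sum_div]
    have : ∑ k ∈ range n, (k : ℂ) = n * (n - 1) / 2 := by
      have h := Finset.sum_range_id_mul_two n
      have h2 : ((∑ i ∈ range n, i : ℕ) : ℂ) * 2 = ((n * (n - 1) : ℕ) : ℂ) := by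
        exact_mod_cast congrArg (Nat.cast : ℕ → ℂ) h
      push_cast at h2
      have hn1 : ((n : ℂ) - 1) * (n : ℂ) = (n : ℂ) * ((n : ℂ) - 1) := by ring
      rcases n with _ | n'
      · simp
      · push_cast at h2 ⊢
        push_cast [Nat.cast_sub (by omega : 1 ≤ n' + 1)] at h2
        linear_combination h2 / 2
    rw [this, nsmul_eq_mul]
    field_simp
  -- F3 : GammaSeq at n*x, n*m
  have F3 : Complex.GammaSeq ((n : ℂ) * x) (n * m) =
      (n : ℂ) ^ ((n : ℂ) * x) * (m : ℂ) ^ ((n : ℂ) * x) * ((Nat.factorial (n * m) : ℂ)) / P := by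
    rw [Complex.GammaSeq]
    congr 2
    have hcast : ((n * m : ℕ) : ℂ) = ((n : ℝ) : ℂ) * ((m : ℝ) : ℂ) := by push_cast; ring
    rw [hcast, mul_cpow_ofReal_nonneg (Nat.cast_nonneg n) (Nat.cast_nonneg m)]
    norm_num
  set S : ℂ := ∏ i ∈ range (n - 1), ((n * m + 1 + i : ℕ) : ℂ) with hSdef
  -- F4 : factorial identity
  have F4 : ((Nat.factorial (n * m + n - 1) : ℕ) : ℂ) =
      ((Nat.factorial (n * m) : ℕ) : ℂ) * S := by
    rw [hSdef]
    have h := fact_prod_aux (n * m) (n - 1)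
    have h2 : n * m + (n - 1) = n * m + n - 1 := by omega
    rw [h2] at h
    rw [← h]
    push_cast
    ring
  -- assemble
  have hfac : (Nat.factorial (n * m + n - 1) : ℂ) ≠ 0 :=
    Nat.cast_ne_zero.mpr (Nat.factorial_ne_zero _)
  have hfacm : (Nat.factorial m : ℂ) ≠ 0 := Nat.cast_ne_zero.mpr (Nat.factorial_ne_zero _)
  have hA : (n : ℂ) ^ ((n : ℂ) * x) ≠ 0 := by
    simp [Complex.cpow_eq_zero_iff, hnC]
  have hratio : ∀ i ∈ range (n - 1), ((n : ℂ) * x + ((n * m + 1 + i : ℕ) : ℂ)) ≠ 0 :=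
    fun i _ => hpole _
  -- expand LHS
  have hLHS : ∏ k ∈ range n, Complex.GammaSeq (x + (k : ℂ) / n) m =
      ((m : ℂ) ^ ((n : ℂ) * x) * (m : ℂ) ^ (((n : ℂ) - 1) / 2)) * ((Nat.factorial m : ℂ)) ^ n /
        (P * R / (n : ℂ) ^ (n * (m + 1))) := by
    simp only [Complex.GammaSeq]
    rw [Finset.prod_div_distrib, Finset.prod_mul_distrib, Finset.prod_const, card_range, F2, ← F1]
  rw [hLHS, F3]
  rw [show (n : ℂ) ^ (n * (m + 1)) = (n : ℂ) ^ (n * m + n) by rw [Nat.mul_succ]]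
  have hRprod : ∏ i ∈ range (n - 1),
      (((n * m + 1 + i : ℕ) : ℂ) / ((n : ℂ) * x + ((n * m + 1 + i : ℕ) : ℂ))) =
      S / R := by
    rw [Finset.prod_div_distrib]
  rw [hRprod]
  have hnpow : (n : ℂ) ^ (n * m + n) ≠ 0 := pow_ne_zero _ hnC
  field_simp
  rw [F4]
  ring

lemma gauss_tendsto (n : ℕ) (hn : 1 ≤ n) (x : ℂ)
    (hx : ∀ k : ℕ, k < n → ∀ m : ℕ, x + (k : ℂ) / (n : ℂ) ≠ -(m : ℂ)) :
    Tendsto (fun m : ℕ => (m : ℂ) ^ (((n : ℂ) - 1) / 2) * ((Nat.factorial m : ℂ)) ^ n *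
        (n : ℂ) ^ (n * m + n) / (Nat.factorial (n * m + n - 1) : ℂ)) atTop
      (𝓝 ((n : ℂ) ^ ((n : ℂ) * x) * (∏ k ∈ range n, Complex.Gamma (x + (k : ℂ) / n)) /
        Complex.Gamma ((n : ℂ) * x))) := by
  have hnC : (n : ℂ) ≠ 0 := Nat.cast_ne_zero.mpr (by omega)
  have hpole : ∀ i : ℕ, (n : ℂ) * x + (i : ℕ) ≠ 0 := by
    intro i h
    have hr : i % n < n := Nat.mod_lt _ (by omega)
    apply hx (i % n) hr (i / n)
    have hi : (i : ℂ) = (n : ℂ) * (i / n : ℕ) + (i % n : ℕ) := by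
      exact_mod_cast congrArg (Nat.cast : ℕ → ℂ) (Nat.div_add_mod i n).symm
    have h3 : (n : ℂ) * (x + (i % n : ℕ) / n + (i / n : ℕ)) = 0 := by
      rw [mul_add, mul_add, mul_div_cancel₀ _ hnC]
      rw [hi] at h
      linear_combination h
    rcases mul_eq_zero.mp h3 with h2 | h2
    · exact absurd h2 hnC
    · linear_combination h2
  have hG : Complex.Gamma ((n : ℂ) * x) ≠ 0 := by
    apply Complex.Gamma_ne_zero
    intro m h
    exact hpole m (by rw [h]; ring)
  -- limit of the product of GammaSeq
  have hA : Tendsto (fun m : ℕ => ∏ k ∈ range n, Complex.GammaSeq (x + (k : ℂ) / n) m) atTop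
      (𝓝 (∏ k ∈ range n, Complex.Gamma (x + (k : ℂ) / n))) :=
    tendsto_finset_prod _ fun k _ => Complex.GammaSeq_tendsto_Gamma _
  -- limit of GammaSeq (n x) (n m)
  have hB : Tendsto (fun m : ℕ => Complex.GammaSeq ((n : ℂ) * x) (n * m)) atTop
      (𝓝 (Complex.Gamma ((n : ℂ) * x))) := by
    apply (Complex.GammaSeq_tendsto_Gamma ((n : ℂ) * x)).comp
    exact tendsto_atTop_mono (fun m => Nat.le_mul_of_pos_left m (by omega)) tendsto_id
  -- limit of the ratio product
  have hC : Tendsto (fun m : ℕ => ∏ i ∈ range (n - 1),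
      (((n * m + 1 + i : ℕ) : ℂ) / ((n : ℂ) * x + ((n * m + 1 + i : ℕ) : ℂ)))) atTop (𝓝 1) := by
    have : (1 : ℂ) = ∏ _i ∈ range (n - 1), (1 : ℂ) := by simp
    rw [this]
    apply tendsto_finset_prod
    intro i _
    -- each factor tends to 1
    have key : ∀ m : ℕ, ((n * m + 1 + i : ℕ) : ℂ) / ((n : ℂ) * x + ((n * m + 1 + i : ℕ) : ℂ)) =
        (1 + (n : ℂ) * x * (((n * m + 1 + i : ℕ) : ℝ) : ℂ)⁻¹)⁻¹ := by
      intro m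
      have hNpos : (0 : ℝ) < ((n * m + 1 + i : ℕ) : ℝ) := by positivity
      have hN : (((n * m + 1 + i : ℕ) : ℝ) : ℂ) ≠ 0 := by
        simp only [ne_eq, Complex.ofReal_eq_zero]
        exact hNpos.ne'
      have hD : (n : ℂ) * x + ((n * m + 1 + i : ℕ) : ℂ) ≠ 0 := hpole _
      have hcast : ((n * m + 1 + i : ℕ) : ℂ) = (((n * m + 1 + i : ℕ) : ℝ) : ℂ) := by push_cast; ring
      rw [hcast] at hD ⊢
      have hstep : 1 + (n : ℂ) * x * ((((n * m + 1 + i : ℕ) : ℝ)) : ℂ)⁻¹ =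
          ((n : ℂ) * x + (((n * m + 1 + i : ℕ) : ℝ) : ℂ)) / (((n * m + 1 + i : ℕ) : ℝ) : ℂ) := by
        have hN' : ((n : ℂ) * m + 1 + i) ≠ 0 := by push_cast at hN ⊢; exact hN
        field_simp
        ring
      rw [hstep, inv_div]
    simp only [key]
    have h0 : Tendsto (fun m : ℕ => (n : ℂ) * x * (((n * m + 1 + i : ℕ) : ℝ) : ℂ)⁻¹) atTop (𝓝 0) := by
      rw [show (0 : ℂ) = (n : ℂ) * x * 0 by ring]
      apply Tendsto.const_mul
      have hr : Tendsto (fun m : ℕ => ((n * m + 1 + i : ℕ) : ℝ)⁻¹) atTop (𝓝 0) := by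
        apply tendsto_inv_atTop_zero.comp
        apply tendsto_natCast_atTop_atTop.comp
        have hmono : ∀ m : ℕ, m ≤ n * m + 1 + i := by
          intro m
          have h1 : m ≤ n * m := Nat.le_mul_of_pos_left m (by omega)
          omega
        exact tendsto_atTop_mono hmono tendsto_id
      have h2 := (Complex.continuous_ofReal.tendsto 0).comp hr
      simpa [Function.comp_def] using h2
    have h1 : Tendsto (fun m : ℕ => 1 + (n : ℂ) * x * (((n * m + 1 + i : ℕ) : ℝ) : ℂ)⁻¹) atTop
        (𝓝 (1 + 0)) := tendsto_const_nhds.add h0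
    rw [add_zero] at h1
    have h3 := h1.inv₀ (by norm_num)
    simpa using h3
  -- GammaSeq (n x) (n m) ≠ 0 for m ≥ 1, and ratio ≠ 0
  have hBne : ∀ m : ℕ, 1 ≤ m → Complex.GammaSeq ((n : ℂ) * x) (n * m) ≠ 0 := by
    intro m hm
    rw [Complex.GammaSeq]
    apply div_ne_zero
    · apply mul_ne_zero
      · simp only [ne_eq, Complex.cpow_eq_zero_iff, not_and_or, not_not]
        left
        exact Nat.cast_ne_zero.mpr (by positivity)
      · exact Nat.cast_ne_zero.mpr (Nat.factorial_ne_zero _)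
    · exact prod_ne_zero_iff.mpr fun i _ => hpole i
  have hCne : ∀ m : ℕ, (∏ i ∈ range (n - 1),
      (((n * m + 1 + i : ℕ) : ℂ) / ((n : ℂ) * x + ((n * m + 1 + i : ℕ) : ℂ)))) ≠ 0 := by
    intro m
    apply prod_ne_zero_iff.mpr
    intro i _
    apply div_ne_zero
    · exact Nat.cast_ne_zero.mpr (by positivity)
    · exact hpole _
  -- identify c with the quotient, eventually
  have hEq : ∀ᶠ m : ℕ in atTop,
      (m : ℂ) ^ (((n : ℂ) - 1) / 2) * ((Nat.factorial m : ℂ)) ^ n * (n : ℂ) ^ (n * m + n) /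
          (Nat.factorial (n * m + n - 1) : ℂ) =
        ((∏ k ∈ range n, Complex.GammaSeq (x + (k : ℂ) / n) m) * (n : ℂ) ^ ((n : ℂ) * x)) /
          (Complex.GammaSeq ((n : ℂ) * x) (n * m) *
            ∏ i ∈ range (n - 1), (((n * m + 1 + i : ℕ) : ℂ) / ((n : ℂ) * x + ((n * m + 1 + i : ℕ) : ℂ)))) := by
    filter_upwards [eventually_ge_atTop 1] with m hm
    rw [eq_div_iff (mul_ne_zero (hBne m hm) (hCne m)), mul_comm
      (∏ k ∈ range n, Complex.GammaSeq (x + (k : ℂ) / n) m) ((n : ℂ) ^ ((n : ℂ) * x)),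
      gauss_step n hn x hx m hm]
    ring
  rw [show (n : ℂ) ^ ((n : ℂ) * x) * (∏ k ∈ range n, Complex.Gamma (x + (k : ℂ) / n)) /
      Complex.Gamma ((n : ℂ) * x) =
      ((∏ k ∈ range n, Complex.Gamma (x + (k : ℂ) / n)) * (n : ℂ) ^ ((n : ℂ) * x)) /
        (Complex.Gamma ((n : ℂ) * x) * 1) by rw [mul_one]; ring]
  apply Tendsto.congr' (hEq.mono fun m hm => hm.symm)
  exact (hA.mul tendsto_const_nhds).div (hB.mul hC) (by simp [hG])


lemma const_eval (n : ℕ) (hn : 1 ≤ n) :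
    (n : ℂ) * ∏ k ∈ range n, Complex.Gamma (((k : ℂ) + 1) / n) =
      ((2 * π : ℝ) : ℂ) ^ (((n : ℂ) - 1) / 2) * (n : ℂ) ^ ((1 / 2 : ℂ)) := by
  have hprod : ∏ k ∈ range n, Complex.Gamma (((k : ℂ) + 1) / n) =
      ((∏ k ∈ range n, Real.Gamma (((k : ℝ) + 1) / n) : ℝ) : ℂ) := by
    rw [Complex.ofReal_prod]
    refine prod_congr rfl fun k _ => ?_
    rw [← Complex.Gamma_ofReal]
    congr 1
    push_cast
    ring
  rw [hprod, show (n : ℂ) = ((n : ℝ) : ℂ) from by push_cast; ring, ← Complex.ofReal_mul,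
    gamma_prod_real n hn, Complex.ofReal_mul]
  congr 1
  · rw [Complex.ofReal_cpow (by positivity : (0:ℝ) ≤ 2 * π) (((n : ℝ) - 1) / 2)]
    congr 1
    push_cast
    ring
  · rw [Real.sqrt_eq_rpow,
      Complex.ofReal_cpow (Nat.cast_nonneg n) (1 / 2 : ℝ)]
    norm_num


/-- Gauss multiplication formula for the Gamma function:
`Γ(nx) = (2π)^{−(n−1)/2} n^{nx−1/2} ∏_{k=0}^{n−1} Γ(x + k/n)`. -/
theorem gauss_multiplication (n : ℕ) (hn : 1 ≤ n) (x : ℂ)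
    (hx : ∀ k : ℕ, k < n → ∀ m : ℕ, x + (k : ℂ) / (n : ℂ) ≠ -(m : ℂ)) :
    Complex.Gamma ((n : ℂ) * x) =
      ((2 * Real.pi : ℝ) : ℂ) ^ (-(((n : ℂ) - 1) / 2)) * (n : ℂ) ^ ((n : ℂ) * x - 1 / 2) *
        ∏ k ∈ Finset.range n, Complex.Gamma (x + (k : ℂ) / (n : ℂ)) := by
  have hnC : (n : ℂ) ≠ 0 := Nat.cast_ne_zero.mpr (by omega)
  have hx0 : ∀ k : ℕ, k < n → ∀ m : ℕ, (n : ℂ)⁻¹ + (k : ℂ) / (n : ℂ) ≠ -(m : ℂ) := by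
    intro k hk m h
    field_simp at h
    have h2 : ((1 + k + m * n : ℕ) : ℂ) = 0 := by
      push_cast
      linear_combination h
    rw [Nat.cast_eq_zero] at h2
    omega
  have h1 := gauss_tendsto n hn x hx
  have h2 := gauss_tendsto n hn ((n : ℂ)⁻¹) hx0
  -- simplify the limit of h2
  have h2' : (n : ℂ) ^ ((n : ℂ) * (n : ℂ)⁻¹) *
      (∏ k ∈ range n, Complex.Gamma ((n : ℂ)⁻¹ + (k : ℂ) / n)) /
        Complex.Gamma ((n : ℂ) * (n : ℂ)⁻¹) =
      (n : ℂ) * ∏ k ∈ range n, Complex.Gamma (((k : ℂ) + 1) / n) := by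
    rw [mul_inv_cancel₀ hnC, Complex.cpow_one, Complex.Gamma_one, div_one]
    congr 1
    refine prod_congr rfl fun k _ => ?_
    congr 1
    rw [inv_eq_one_div, ← add_div, add_comm (1 : ℂ) (k : ℂ)]
  rw [h2'] at h2
  have key := tendsto_nhds_unique h1 h2
  rw [const_eval n hn] at key
  -- nonvanishing
  have hG : Complex.Gamma ((n : ℂ) * x) ≠ 0 := by
    apply Complex.Gamma_ne_zero
    intro m h
    have hr : m % n < n := Nat.mod_lt _ (by omega)
    apply hx (m % n) hr (m / n)
    have hi : (m : ℂ) = (n : ℂ) * (m / n : ℕ) + (m % n : ℕ) := by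
      exact_mod_cast congrArg (Nat.cast : ℕ → ℂ) (Nat.div_add_mod m n).symm
    have h3 : (n : ℂ) * (x + (m % n : ℕ) / n + (m / n : ℕ)) = 0 := by
      rw [mul_add, mul_add, mul_div_cancel₀ _ hnC]
      rw [hi] at h
      linear_combination h
    rcases mul_eq_zero.mp h3 with h4 | h4
    · exact absurd h4 hnC
    · linear_combination h4
  have hw : ((2 * π : ℝ) : ℂ) ≠ 0 := by
    simp only [ne_eq, Complex.ofReal_eq_zero]
    positivity
  have hd : ((2 * π : ℝ) : ℂ) ^ (((n : ℂ) - 1) / 2) ≠ 0 := by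
    simp [Complex.cpow_eq_zero_iff, Real.pi_ne_zero]
  have hn2 : (n : ℂ) ^ ((1 / 2 : ℂ)) ≠ 0 := by
    simp [Complex.cpow_eq_zero_iff, hnC]
  have keyEq : (n : ℂ) ^ ((n : ℂ) * x) * ∏ k ∈ range n, Complex.Gamma (x + (k : ℂ) / n) =
      ((2 * π : ℝ) : ℂ) ^ (((n : ℂ) - 1) / 2) * (n : ℂ) ^ ((1 / 2 : ℂ)) *
        Complex.Gamma ((n : ℂ) * x) := by
    rw [div_eq_iff hG] at key
    exact key
  -- rewrite goal
  rw [Complex.cpow_neg, show (n : ℂ) * x - 1 / 2 = (n : ℂ) * x + (-(1 / 2)) from by ring,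
    Complex.cpow_add _ _ hnC, Complex.cpow_neg]
  have hgoal : (((2 * π : ℝ) : ℂ) ^ (((n : ℂ) - 1) / 2))⁻¹ *
      ((n : ℂ) ^ ((n : ℂ) * x) * ((n : ℂ) ^ ((1 / 2 : ℂ)))⁻¹) *
        (∏ k ∈ range n, Complex.Gamma (x + (k : ℂ) / n)) =
      ((n : ℂ) ^ ((n : ℂ) * x) * ∏ k ∈ range n, Complex.Gamma (x + (k : ℂ) / n)) /
        (((2 * π : ℝ) : ℂ) ^ (((n : ℂ) - 1) / 2) * (n : ℂ) ^ ((1 / 2 : ℂ))) := by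
    rw [div_eq_mul_inv ((n : ℂ) ^ ((n : ℂ) * x) * ∏ k ∈ range n, Complex.Gamma (x + (k : ℂ) / n))
      (((2 * π : ℝ) : ℂ) ^ (((n : ℂ) - 1) / 2) * (n : ℂ) ^ ((1 / 2 : ℂ))), mul_inv]
    ring
  rw [hgoal, keyEq, mul_div_cancel_left₀ _ (mul_ne_zero hd hn2)]
end

section
/- Define q(s) = (s+1)(s−2)(5s²+4)/(s(s−1)(5s²−4)) and t(s) = (s+1)²(s−2)/((s−1)²(s+2)) for s in an open interval where all denominators are nonzero and t'(s) ≠ 0. Then the function q ∘ t^{-1} satisfies the Painlevé VI equation with parameters (θ0, θ1, θt, θ∞) = (2, 0, 0, 2/3). -/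
noncomputable def PVIqd (r : ℝ) : ℝ :=
  (20*r^5 + 110*r^4 + 80*r^3 - 160*r^2 - 64*r + 32) / (r*(r-1)*(5*r^2-4))^2

noncomputable def PVItd (r : ℝ) : ℝ :=
  (12*r^2 - 12) / ((r-1)^2*(r+2))^2

lemma PVIhQ (r : ℝ) (h : r*(r-1)*(5*r^2-4) ≠ 0) :
    HasDerivAt (fun s : ℝ => (s + 1) * (s - 2) * (5 * s ^ 2 + 4) / (s * (s - 1) * (5 * s ^ 2 - 4)))
      (PVIqd r) r := by
  have hn : HasDerivAt (fun s : ℝ => (s + 1) * (s - 2) * (5 * s ^ 2 + 4))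
      (20*r^3 - 15*r^2 - 12*r - 4) r := by
    have := (((hasDerivAt_id r).add_const 1).mul ((hasDerivAt_id r).sub_const 2)).mul
      (((hasDerivAt_pow 2 r).const_mul 5).add_const 4)
    exact this.congr_deriv (by simp; ring)
  have hd : HasDerivAt (fun s : ℝ => s * (s - 1) * (5 * s ^ 2 - 4))
      (20*r^3 - 15*r^2 - 8*r + 4) r := by
    have := (((hasDerivAt_id r).mul ((hasDerivAt_id r).sub_const 1))).mul
      (((hasDerivAt_pow 2 r).const_mul 5).sub_const 4)
    exact this.congr_deriv (by simp; ring)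
  have := hn.div hd h
  refine this.congr_deriv ?_
  unfold PVIqd
  field_simp
  ring

lemma PVIhT (r : ℝ) (h : (r-1)^2*(r+2) ≠ 0) :
    HasDerivAt (fun s : ℝ => (s + 1) ^ 2 * (s - 2) / ((s - 1) ^ 2 * (s + 2)))
      (PVItd r) r := by
  have hn : HasDerivAt (fun s : ℝ => (s + 1) ^ 2 * (s - 2)) (3*r^2 - 3) r := by
    have := (((hasDerivAt_id r).add_const 1).pow 2).mul ((hasDerivAt_id r).sub_const 2)
    exact this.congr_deriv (by simp; ring)
  have hd : HasDerivAt (fun s : ℝ => (s - 1) ^ 2 * (s + 2)) (3*r^2 - 3) r := by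
    have := (((hasDerivAt_id r).sub_const 1).pow 2).mul ((hasDerivAt_id r).add_const 2)
    exact this.congr_deriv (by simp; ring)
  have := hn.div hd h
  refine this.congr_deriv ?_
  unfold PVItd
  field_simp
  ring

noncomputable def PVIqdd (r : ℝ) : ℝ :=
  (-300*r^8 - 2100*r^7 - 980*r^6 + 6240*r^5 + 240*r^4 - 3840*r^3 + 192*r^2 + 768*r - 256)
    / (r*(r-1)*(5*r^2-4))^3

noncomputable def PVItdd (r : ℝ) : ℝ :=
  (-48*r^4 + 72*r^2 + 48*r - 72) / ((r-1)^2*(r+2))^3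

lemma PVIhqd (r : ℝ) (h : r*(r-1)*(5*r^2-4) ≠ 0) :
    HasDerivAt PVIqd (PVIqdd r) r := by
  have hn : HasDerivAt (fun s : ℝ => 20*s^5 + 110*s^4 + 80*s^3 - 160*s^2 - 64*s + 32)
      (100*r^4 + 440*r^3 + 240*r^2 - 320*r - 64) r := by
    have := ((((((hasDerivAt_pow 5 r).const_mul 20).add ((hasDerivAt_pow 4 r).const_mul 110)).add ((hasDerivAt_pow 3 r).const_mul 80)).sub ((hasDerivAt_pow 2 r).const_mul 160)).sub ((hasDerivAt_id r).const_mul 64)).add_const 32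
    exact this.congr_deriv (by simp; ring)
  have hd0 : HasDerivAt (fun s : ℝ => s * (s - 1) * (5 * s ^ 2 - 4))
      (20*r^3 - 15*r^2 - 8*r + 4) r := by
    have := (((hasDerivAt_id r).mul ((hasDerivAt_id r).sub_const 1))).mul
      (((hasDerivAt_pow 2 r).const_mul 5).sub_const 4)
    exact this.congr_deriv (by simp; ring)
  have hd : HasDerivAt (fun s : ℝ => (s * (s - 1) * (5 * s ^ 2 - 4))^2)
      (2 * (r*(r-1)*(5*r^2-4)) * (20*r^3 - 15*r^2 - 8*r + 4)) r := by
    have := hd0.pow 2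
    exact this.congr_deriv (by simp)
  have := hn.div hd (pow_ne_zero 2 h)
  refine this.congr_deriv ?_
  unfold PVIqdd
  field_simp
  ring

lemma PVIhtd (r : ℝ) (h : (r-1)^2*(r+2) ≠ 0) :
    HasDerivAt PVItd (PVItdd r) r := by
  have hn : HasDerivAt (fun s : ℝ => 12*s^2 - 12) (24*r) r := by
    have := ((hasDerivAt_pow 2 r).const_mul 12).sub_const 12
    exact this.congr_deriv (by simp; ring)
  have hd0 : HasDerivAt (fun s : ℝ => (s - 1) ^ 2 * (s + 2)) (3*r^2 - 3) r := by
    have := (((hasDerivAt_id r).sub_const 1).pow 2).mul ((hasDerivAt_id r).add_const 2)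
    exact this.congr_deriv (by simp; ring)
  have hd : HasDerivAt (fun s : ℝ => ((s - 1) ^ 2 * (s + 2))^2)
      (2 * ((r-1)^2*(r+2)) * (3*r^2 - 3)) r := by
    have := hd0.pow 2
    exact this.congr_deriv (by simp)
  have := hn.div hd (pow_ne_zero 2 h)
  refine this.congr_deriv ?_
  unfold PVItdd
  field_simp
  ring

set_option maxHeartbeats 4000000 in
/-- The rational curve `q(s) = (s+1)(s−2)(5s²+4)/(s(s−1)(5s²−4))`,
`t(s) = (s+1)²(s−2)/((s−1)²(s+2))` defines a solution of Painlevé VI with parameters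
`(θ0, θ1, θt, θ∞) = (2, 0, 0, 2/3)`, in parametric form. -/
theorem algebraic_PVI_solution_three_branch (a b : ℝ) :
    ∀ Q T : ℝ → ℝ,
      (Q = fun s : ℝ => (s + 1) * (s - 2) * (5 * s ^ 2 + 4) / (s * (s - 1) * (5 * s ^ 2 - 4))) →
      (T = fun s : ℝ => (s + 1) ^ 2 * (s - 2) / ((s - 1) ^ 2 * (s + 2))) →
      (∀ s ∈ Set.Ioo a b, s ≠ 0 ∧ s ≠ 1 ∧ 5 * s ^ 2 - 4 ≠ 0 ∧ s ≠ -2 ∧ deriv T s ≠ 0) →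
      (∀ s ∈ Set.Ioo a b,
        Q s ≠ 0 ∧ Q s ≠ 1 ∧ Q s ≠ T s ∧ T s ≠ 0 ∧ T s ≠ 1) →
      ∀ s ∈ Set.Ioo a b,
        (fun qt : ℝ → ℝ =>
          deriv qt s / deriv T s =
            (1 / 2) * (1 / Q s + 1 / (Q s - 1) + 1 / (Q s - T s)) * (qt s) ^ 2
            - (1 / T s + 1 / (T s - 1) + 1 / (Q s - T s)) * qt s
            + Q s * (Q s - 1) * (Q s - T s) / (2 * (T s) ^ 2 * (T s - 1) ^ 2) *
              ((2 / 3 - 1) ^ 2 - (2 : ℝ) ^ 2 * T s / (Q s) ^ 2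
                + (0 : ℝ) ^ 2 * (T s - 1) / (Q s - 1) ^ 2
                + (1 - (0 : ℝ) ^ 2) * T s * (T s - 1) / (Q s - T s) ^ 2))
        (fun r : ℝ => deriv Q r / deriv T r) := by
  intro Q T hQdef hTdef hcond hval s hs
  subst hQdef hTdef
  obtain ⟨hs0, hs1, hs54, hs2, hTd⟩ := hcond s hs
  obtain ⟨hQ0, hQ1, hQT, hT0, hT1⟩ := hval s hs
  have hs1' : s - 1 ≠ 0 := sub_ne_zero.mpr hs1
  have hs2' : s + 2 ≠ 0 := by intro h; exact hs2 (by linarith)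
  have hd1 : s * (s - 1) * (5 * s ^ 2 - 4) ≠ 0 := mul_ne_zero (mul_ne_zero hs0 hs1') hs54
  have hd2 : (s - 1) ^ 2 * (s + 2) ≠ 0 := mul_ne_zero (pow_ne_zero 2 hs1') hs2'
  -- rewrite first derivatives
  have hTds : deriv (fun s : ℝ => (s + 1) ^ 2 * (s - 2) / ((s - 1) ^ 2 * (s + 2))) s = PVItd s :=
    (PVIhT s hd2).deriv
  have hQds : deriv (fun s : ℝ => (s + 1) * (s - 2) * (5 * s ^ 2 + 4) /
      (s * (s - 1) * (5 * s ^ 2 - 4))) s = PVIqd s := (PVIhQ s hd1).deriv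
  rw [hTds] at hTd
  have htdnum : (12 * s ^ 2 - 12 : ℝ) ≠ 0 := by
    intro h
    apply hTd
    unfold PVItd
    rw [h, zero_div]
  have htd : PVItd s ≠ 0 := hTd
  -- the second derivative
  have hev : (fun r : ℝ => deriv (fun s : ℝ => (s + 1) * (s - 2) * (5 * s ^ 2 + 4) /
        (s * (s - 1) * (5 * s ^ 2 - 4))) r / deriv (fun s : ℝ => (s + 1) ^ 2 * (s - 2) /
        ((s - 1) ^ 2 * (s + 2))) r)
      =ᶠ[nhds s] (fun r : ℝ => PVIqd r / PVItd r) := by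
    have h1 : ∀ᶠ r in nhds s, r * (r - 1) * (5 * r ^ 2 - 4) ≠ 0 :=
      ((by fun_prop : Continuous fun r : ℝ => r * (r - 1) * (5 * r ^ 2 - 4)).continuousAt).eventually_ne hd1
    have h2 : ∀ᶠ r in nhds s, (r - 1) ^ 2 * (r + 2) ≠ 0 :=
      ((by fun_prop : Continuous fun r : ℝ => (r - 1) ^ 2 * (r + 2)).continuousAt).eventually_ne hd2
    filter_upwards [h1, h2] with r h1r h2r
    rw [(PVIhQ r h1r).deriv, (PVIhT r h2r).deriv]
  have hW : HasDerivAt (fun r : ℝ => PVIqd r / PVItd r)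
      ((PVIqdd s * PVItd s - PVIqd s * PVItdd s) / (PVItd s) ^ 2) s :=
    (PVIhqd s hd1).div (PVIhtd s hd2) htd
  have hWs : deriv (fun r : ℝ => deriv (fun s : ℝ => (s + 1) * (s - 2) * (5 * s ^ 2 + 4) /
        (s * (s - 1) * (5 * s ^ 2 - 4))) r / deriv (fun s : ℝ => (s + 1) ^ 2 * (s - 2) /
        ((s - 1) ^ 2 * (s + 2))) r) s
      = (PVIqdd s * PVItd s - PVIqd s * PVItdd s) / (PVItd s) ^ 2 :=
    (hW.congr_of_eventuallyEq hev).deriv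
  simp only at hQ0 hQ1 hQT hT0 hT1 ⊢
  rw [hWs, hQds, hTds]
  -- numerator nonvanishing facts
  have hn1 : (s + 1) * (s - 2) * (5 * s ^ 2 + 4) ≠ 0 := by
    intro h; exact hQ0 (by rw [h, zero_div])
  have hn2 : (s + 1) ^ 2 * (s - 2) ≠ 0 := by
    intro h; exact hT0 (by rw [h, zero_div])
  have hn1d1 : (s + 1) * (s - 2) * (5 * s ^ 2 + 4) - s * (s - 1) * (5 * s ^ 2 - 4) ≠ 0 := by
    intro h
    exact hQ1 (by rw [div_eq_one_iff_eq hd1]; linarith)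
  have hn2d2 : (s + 1) ^ 2 * (s - 2) - (s - 1) ^ 2 * (s + 2) ≠ 0 := by
    intro h
    exact hT1 (by rw [div_eq_one_iff_eq hd2]; linarith)
  have hqt : (s + 1) * (s - 2) * (5 * s ^ 2 + 4) * ((s - 1) ^ 2 * (s + 2))
      - s * (s - 1) * (5 * s ^ 2 - 4) * ((s + 1) ^ 2 * (s - 2)) ≠ 0 := by
    intro h
    exact hQT (by rw [div_eq_div_iff hd1 hd2]; linarith)
  have hsm1 : s + 1 ≠ 0 := by
    intro h; apply htdnum; rw [show s = -1 by linarith]; norm_num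
  have hsm2 : s - 2 ≠ 0 := by
    intro h; apply hn2; rw [h, mul_zero]
  have h54p : 5 * s ^ 2 + 4 ≠ 0 := by positivity
  unfold PVIqd PVItd PVIqdd PVItdd
  simp only [div_sub_div _ _ hd1 hd2, div_sub_one hd1, div_sub_one hd2]
  have hqt2 : (s - 1) * (s + 2) * (s ^ 2 * 5 + 4) - s * (s ^ 2 * 5 - 4) * (s + 1) ≠ 0 := by
    intro h; apply hqt; linear_combination (s + 1) * (s - 1) * (s - 2) * h
  have hn1d1' : (s + 1) * (s - 2) * (s ^ 2 * 5 + 4) - s * (s - 1) * (s ^ 2 * 5 - 4) ≠ 0 := by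
    intro h; apply hn1d1; linear_combination h
  have hs54' : s ^ 2 * 5 - 4 ≠ 0 := by
    intro h; apply hs54; linear_combination h
  have hsq1 : s ^ 2 - 1 ≠ 0 := by
    intro h; apply htdnum; linear_combination 12 * h
  field_simp [hs0, hs1', hs2', hs54, hsm1, hsm2, h54p, htdnum, hn1, hn2, hn1d1, hn2d2, hqt, hqt2, hn1d1', hs54', hsq1]
  ring
end
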